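/- arXiv:1907.05825 — 4 statements merged into one kernel-verified Lean document; each statement's English description precedes it below -/
import Mathlib

section
/- Let $T_q$ be the homogeneous tree of degree $q+1 \geq 3$ with vertex set $V$ and root $o$. If $X \subseteq V$ has positive upper density at some vertex $x \in V$, then $X$ has positive upper density at every vertex $y \in V$; in fact $d^*(X,y) \geq (2(q+q^{-1}))^{-d(x,y)} \, d^*(X,x)$. -/
open Filter

/-- The sphere of radius `n` about `x` in a graph. -/
def gSphere {V : Type*} (G : SimpleGraph V) (x : V) (n : ℕ) : Set V :=
  {y | G.dist x y = n}

section TreeAux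

variable {V : Type*} {q : ℕ} {G : SimpleGraph V}

lemma nbr_finite (hreg : ∀ v : V, (G.neighborSet v).ncard = q + 1) (v : V) :
    (G.neighborSet v).Finite :=
  Set.finite_of_ncard_pos (by rw [hreg]; omega)

lemma adj_dist_ne (htree : G.IsTree) {x u v : V} (h : G.Adj u v) :
    G.dist x u ≠ G.dist x v := by
  have hconn := htree.isConnected
  classical
  intro heq
  rcases Nat.eq_zero_or_pos (G.dist x u) with h0 | hpos
  · have hxu : x = u := (hconn.dist_eq_zero_iff).mp h0
    have hxv : x = v := (hconn.dist_eq_zero_iff).mp (heq ▸ h0)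
    exact h.ne (hxu ▸ hxv ▸ rfl)
  · obtain ⟨p, hp, hpl⟩ := hconn.exists_path_of_dist x u
    have hv : v ∉ p.support := by
      intro hv
      have h1 := SimpleGraph.dist_le (p.takeUntil v hv)
      have h2 := SimpleGraph.dist_le (p.dropUntil v hv)
      have hlen : (p.takeUntil v hv).length + (p.dropUntil v hv).length = p.length := by
        rw [← SimpleGraph.Walk.length_append, p.take_spec hv]
      have h3 : 1 ≤ G.dist v u := hconn.pos_dist_of_ne h.ne'
      omega
    have hw : ((SimpleGraph.Walk.cons h.symm p.reverse).reverse).IsPath := by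
      apply SimpleGraph.Walk.IsPath.reverse
      exact (hp.reverse).cons (by simpa using hv)
    obtain ⟨qw, hq', hql⟩ := hconn.exists_path_of_dist x v
    have hpath := htree.IsAcyclic.path_unique ⟨_, hw⟩ ⟨qw, hq'⟩
    have hwalk : (SimpleGraph.Walk.cons h.symm p.reverse).reverse = qw :=
      Subtype.ext_iff.mp hpath
    have : (SimpleGraph.Walk.cons h.symm p.reverse).reverse.length = qw.length := by
      rw [hwalk]
    simp only [SimpleGraph.Walk.length_reverse, SimpleGraph.Walk.length_cons] at this
    omega

lemma adj_dist (htree : G.IsTree) {x u v : V} (h : G.Adj u v) :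
    G.dist x v = G.dist x u + 1 ∨ G.dist x u = G.dist x v + 1 := by
  have hconn := htree.isConnected
  have h1 : G.dist x v ≤ G.dist x u + 1 := by
    have := hconn.dist_triangle (u := x) (v := u) (w := v)
    simpa [SimpleGraph.dist_eq_one_iff_adj.mpr h] using this
  have h2 : G.dist x u ≤ G.dist x v + 1 := by
    have := hconn.dist_triangle (u := x) (v := v) (w := u)
    simpa [SimpleGraph.dist_eq_one_iff_adj.mpr h.symm] using this
  have := adj_dist_ne htree (x := x) h
  omega

lemma exists_parent (hconn : G.Connected) {x v : V} {n : ℕ} (hd : G.dist x v = n + 1) :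
    ∃ u, G.Adj u v ∧ G.dist x u = n := by
  have hd' : G.dist v x = n + 1 := by rwa [SimpleGraph.dist_comm]
  obtain ⟨p, hpl⟩ := hconn.exists_walk_length_eq_dist v x
  cases p with
  | nil => simp at hd'
  | @cons _ u _ h p' =>
    have hle : G.dist x u ≤ p'.length := by
      have := SimpleGraph.dist_le p'.reverse
      simpa using this
    have hlen : p'.length + 1 = n + 1 := by
      simpa [hd'] using hpl
    have h2 : G.dist x v ≤ G.dist x u + 1 := by
      have := hconn.dist_triangle (u := x) (v := u) (w := v)
      simpa [SimpleGraph.dist_eq_one_iff_adj.mpr h.symm] using this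
    exact ⟨u, h.symm, by omega⟩

lemma parent_unique (htree : G.IsTree) {x v u u' : V} {n : ℕ}
    (hd : G.dist x v = n + 1) (h : G.Adj u v) (h' : G.Adj u' v)
    (hu : G.dist x u = n) (hu' : G.dist x u' = n) : u = u' := by
  have hconn := htree.isConnected
  obtain ⟨p, hp, hpl⟩ := hconn.exists_path_of_dist x u
  obtain ⟨p', hp', hpl'⟩ := hconn.exists_path_of_dist x u'
  have hl : (p.concat h).length = G.dist x v := by
    rw [SimpleGraph.Walk.length_concat]; omega
  have hl' : (p'.concat h').length = G.dist x v := by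
    rw [SimpleGraph.Walk.length_concat]; omega
  have hP := SimpleGraph.Walk.isPath_of_length_eq_dist _ hl
  have hP' := SimpleGraph.Walk.isPath_of_length_eq_dist _ hl'
  have hpath := htree.IsAcyclic.path_unique ⟨_, hP⟩ ⟨_, hP'⟩
  obtain ⟨hv, -⟩ := SimpleGraph.Walk.concat_inj (Subtype.ext_iff.mp hpath)
  exact hv

lemma sphere_zero (hconn : G.Connected) (x : V) : gSphere G x 0 = {x} := by
  ext y
  simp only [gSphere, Set.mem_setOf_eq, Set.mem_singleton_iff]
  rw [hconn.dist_eq_zero_iff]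
  exact eq_comm

lemma sphere_one (x : V) : gSphere G x 1 = G.neighborSet x := by
  ext y
  simp only [gSphere, Set.mem_setOf_eq, SimpleGraph.mem_neighborSet]
  exact SimpleGraph.dist_eq_one_iff_adj

end TreeAux
section TreeAux2

variable {V : Type*} {q : ℕ} {G : SimpleGraph V}

lemma sphere_succ (htree : G.IsTree) (hreg : ∀ v : V, (G.neighborSet v).ncard = q + 1)
    {x : V} {m : ℕ} (hfin : (gSphere G x (m + 1)).Finite) :
    (gSphere G x (m + 2)).Finite ∧
      (gSphere G x (m + 2)).ncard = q * (gSphere G x (m + 1)).ncard := by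
  classical
  have hconn := htree.isConnected
  set C : V → Set V := fun v => G.neighborSet v ∩ gSphere G x (m + 2) with hC
  have hCfin : ∀ v, (C v).Finite := fun v => (nbr_finite hreg v).inter_of_left _
  have hcover : gSphere G x (m + 2) = ⋃ v ∈ gSphere G x (m + 1), C v := by
    ext w
    constructor
    · intro hw
      obtain ⟨u, hu, hud⟩ := exists_parent hconn hw
      exact Set.mem_biUnion hud ⟨hu, hw⟩
    · rintro ⟨s, ⟨v, rfl⟩, hs⟩
      simp only [Set.mem_iUnion, Set.mem_inter_iff] at hs
      obtain ⟨-, -, hw⟩ := hs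
      exact hw
  have hfin' : (gSphere G x (m + 2)).Finite := by
    rw [hcover]
    exact hfin.biUnion fun v _ => hCfin v
  have hCcard : ∀ v ∈ gSphere G x (m + 1), (C v).ncard = q := by
    intro v hv
    have hvd : G.dist x v = m + 1 := hv
    obtain ⟨u₀, hu₀, hu₀d⟩ := exists_parent hconn hvd
    have hCeq : C v = G.neighborSet v \ {u₀} := by
      ext w
      simp only [hC, Set.mem_inter_iff, SimpleGraph.mem_neighborSet, Set.mem_diff,
        Set.mem_singleton_iff, gSphere, Set.mem_setOf_eq]
      constructor
      · rintro ⟨hadj, hwd⟩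
        refine ⟨hadj, fun hwu => ?_⟩
        rw [hwu] at hwd
        omega
      · rintro ⟨hadj, hne⟩
        refine ⟨hadj, ?_⟩
        rcases adj_dist htree (x := x) hadj with hcase | hcase
        · rw [hvd] at hcase; omega
        · -- dist x v = dist x w + 1, so dist x w = m, contradiction with uniqueness
          exfalso
          apply hne
          have hwd : G.dist x w = m := by omega
          exact parent_unique htree hvd hadj.symm hu₀ hwd hu₀d
    rw [hCeq, Set.ncard_diff_singleton_of_mem (by exact hu₀.symm), hreg]
    omega
  -- disjointness
  have hdisj : ∀ v ∈ gSphere G x (m + 1), ∀ v' ∈ gSphere G x (m + 1), v ≠ v' → Disjoint (C v) (C v') := by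
    intro v hv v' hv' hne
    rw [Set.disjoint_left]
    rintro w ⟨hadj, hwd⟩ ⟨hadj', -⟩
    exact hne (parent_unique htree (hwd : G.dist x w = (m+1) + 1) hadj hadj' hv hv')
  -- Finset conversion
  refine ⟨hfin', ?_⟩
  have hset : hfin'.toFinset = hfin.toFinset.biUnion (fun v => (hCfin v).toFinset) := by
    ext w
    simp only [Set.Finite.mem_toFinset, Finset.mem_biUnion]
    rw [hcover]
    simp only [Set.mem_iUnion, Set.Finite.mem_toFinset]
    tauto
  rw [Set.ncard_eq_toFinset_card _ hfin', hset, Finset.card_biUnion]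
  · have : ∀ v ∈ hfin.toFinset, ((hCfin v).toFinset).card = q := by
      intro v hv
      rw [← Set.ncard_eq_toFinset_card _ (hCfin v)]
      exact hCcard v (hfin.mem_toFinset.mp hv)
    rw [Finset.sum_congr rfl this, Finset.sum_const, ← Set.ncard_eq_toFinset_card _ hfin]
    ring
  · intro v hv v' hv' hne
    have := hdisj v (hfin.mem_toFinset.mp hv) v' (hfin.mem_toFinset.mp hv') hne
    simpa [Finset.disjoint_left, Set.disjoint_left] using this

lemma sphere_card (htree : G.IsTree) (hreg : ∀ v : V, (G.neighborSet v).ncard = q + 1)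
    (x : V) : ∀ n : ℕ, (gSphere G x (n + 1)).Finite ∧
      (gSphere G x (n + 1)).ncard = (q + 1) * q ^ n := by
  intro n
  induction n with
  | zero =>
    rw [sphere_one x]
    exact ⟨nbr_finite hreg x, by rw [hreg]; ring⟩
  | succ m ih =>
    obtain ⟨hfin, hcard⟩ := ih
    obtain ⟨hfin', hcard'⟩ := sphere_succ htree hreg hfin
    refine ⟨hfin', ?_⟩
    rw [hcard', hcard]
    ring

lemma sphere_finite (htree : G.IsTree) (hreg : ∀ v : V, (G.neighborSet v).ncard = q + 1)
    (x : V) (n : ℕ) : (gSphere G x n).Finite := by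
  cases n with
  | zero => rw [sphere_zero htree.isConnected x]; exact Set.finite_singleton x
  | succ m => exact (sphere_card htree hreg x m).1

lemma sphere_pos (hq : 2 ≤ q) (htree : G.IsTree)
    (hreg : ∀ v : V, (G.neighborSet v).ncard = q + 1) (x : V) (n : ℕ) :
    0 < (gSphere G x n).ncard := by
  cases n with
  | zero => rw [sphere_zero htree.isConnected x]; simp
  | succ m =>
    rw [(sphere_card htree hreg x m).2]
    positivity

end TreeAux2
/-- Upper density of `X` with respect to the vertex `x`. -/
noncomputable def upperDensityAt {V : Type*} (G : SimpleGraph V) (X : Set V) (x : V) : ℝ :=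
  Filter.limsup
    (fun n => ((X ∩ gSphere G x n).ncard : ℝ) / ((gSphere G x n).ncard : ℝ))
    Filter.atTop

section Analysis

variable {V : Type*} {q : ℕ} {G : SimpleGraph V} {X : Set V}

private lemma f_nonneg (G : SimpleGraph V) (X : Set V) (z : V) (n : ℕ) :
    0 ≤ ((X ∩ gSphere G z n).ncard : ℝ) / ((gSphere G z n).ncard : ℝ) := by
  positivity

private lemma f_le_one (htree : G.IsTree) (hreg : ∀ v : V, (G.neighborSet v).ncard = q + 1)
    (X : Set V) (z : V) (n : ℕ) :
    ((X ∩ gSphere G z n).ncard : ℝ) / ((gSphere G z n).ncard : ℝ) ≤ 1 := by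
  have hfin := sphere_finite htree hreg z n
  have hle : (X ∩ gSphere G z n).ncard ≤ (gSphere G z n).ncard :=
    Set.ncard_le_ncard Set.inter_subset_right hfin
  rcases Nat.eq_zero_or_pos (gSphere G z n).ncard with h0 | hpos
  · simp [h0]
  · rw [div_le_one (by exact_mod_cast hpos)]
    exact_mod_cast hle

private lemma f_bdd (htree : G.IsTree) (hreg : ∀ v : V, (G.neighborSet v).ncard = q + 1)
    (X : Set V) (z : V) :
    Filter.IsBoundedUnder (· ≤ ·) Filter.atTop
      (fun n => ((X ∩ gSphere G z n).ncard : ℝ) / ((gSphere G z n).ncard : ℝ)) :=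
  Filter.isBoundedUnder_of ⟨1, fun n => f_le_one htree hreg X z n⟩

private lemma f_cobdd (G : SimpleGraph V) (X : Set V) (z : V) :
    Filter.IsCoboundedUnder (· ≤ ·) Filter.atTop
      (fun n => ((X ∩ gSphere G z n).ncard : ℝ) / ((gSphere G z n).ncard : ℝ)) :=
  Filter.IsBoundedUnder.isCoboundedUnder_le
    (Filter.isBoundedUnder_of ⟨0, fun n => f_nonneg G X z n⟩)

lemma density_nonneg (htree : G.IsTree) (hreg : ∀ v : V, (G.neighborSet v).ncard = q + 1)
    (X : Set V) (z : V) : 0 ≤ upperDensityAt G X z :=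
  Filter.le_limsup_of_frequently_le
    (Filter.Frequently.of_forall fun n => f_nonneg G X z n) (f_bdd htree hreg X z)

lemma edge_step (hq : 2 ≤ q) (htree : G.IsTree)
    (hreg : ∀ v : V, (G.neighborSet v).ncard = q + 1) (X : Set V)
    {u v : V} (huv : G.Adj u v) :
    upperDensityAt G X u ≤ ((q : ℝ) + (q : ℝ)⁻¹) * upperDensityAt G X v := by
  have hconn := htree.isConnected
  have hq0 : (0:ℝ) < (q:ℝ) := by exact_mod_cast Nat.lt_of_lt_of_le Nat.zero_lt_two hq
  set f : ℕ → ℝ :=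
    fun n => ((X ∩ gSphere G u n).ncard : ℝ) / ((gSphere G u n).ncard : ℝ) with hf
  set g : ℕ → ℝ :=
    fun n => ((X ∩ gSphere G v n).ncard : ℝ) / ((gSphere G v n).ncard : ℝ) with hg
  have hLdef : upperDensityAt G X v = Filter.limsup g Filter.atTop := rfl
  have hfdef : upperDensityAt G X u = Filter.limsup f Filter.atTop := rfl
  set L : ℝ := Filter.limsup g Filter.atTop with hL
  have hgb := f_bdd htree hreg X v
  have hfc := f_cobdd G X u
  have hL0 : 0 ≤ L := hLdef ▸ density_nonneg htree hreg X v
  -- pointwise key inequality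
  have key : ∀ m : ℕ, f (m + 2) ≤ (q:ℝ)⁻¹ * g (m + 1) + (q:ℝ) * g (m + 3) := by
    intro m
    have hsub : X ∩ gSphere G u (m + 2) ⊆
        (X ∩ gSphere G v (m + 1)) ∪ (X ∩ gSphere G v (m + 3)) := by
      rintro w ⟨hwX, hwd⟩
      have hwd' : G.dist u w = m + 2 := hwd
      rcases adj_dist htree (x := w) huv with hcase | hcase
      · right
        refine ⟨hwX, ?_⟩
        show G.dist v w = m + 3
        rw [SimpleGraph.dist_comm] at hwd' ⊢
        omega
      · left
        refine ⟨hwX, ?_⟩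
        show G.dist v w = m + 1
        rw [SimpleGraph.dist_comm] at hwd' ⊢
        omega
    have hfin1 : (X ∩ gSphere G v (m + 1)).Finite :=
      (sphere_finite htree hreg v (m + 1)).subset Set.inter_subset_right
    have hfin3 : (X ∩ gSphere G v (m + 3)).Finite :=
      (sphere_finite htree hreg v (m + 3)).subset Set.inter_subset_right
    have hcardle : (X ∩ gSphere G u (m + 2)).ncard ≤
        (X ∩ gSphere G v (m + 1)).ncard + (X ∩ gSphere G v (m + 3)).ncard :=
      le_trans (Set.ncard_le_ncard hsub (hfin1.union hfin3)) (Set.ncard_union_le _ _)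
    set A : ℝ := ((X ∩ gSphere G u (m + 2)).ncard : ℝ) with hA
    set B : ℝ := ((X ∩ gSphere G v (m + 1)).ncard : ℝ) with hB
    set C : ℝ := ((X ∩ gSphere G v (m + 3)).ncard : ℝ) with hC
    set Du : ℝ := ((gSphere G u (m + 2)).ncard : ℝ) with hDu
    set Dv1 : ℝ := ((gSphere G v (m + 1)).ncard : ℝ) with hDv1
    set Dv3 : ℝ := ((gSphere G v (m + 3)).ncard : ℝ) with hDv3
    have hDupos : (0:ℝ) < Du := by
      rw [hDu]; exact_mod_cast sphere_pos hq htree hreg u (m + 2)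
    have hDv1pos : (0:ℝ) < Dv1 := by
      rw [hDv1]; exact_mod_cast sphere_pos hq htree hreg v (m + 1)
    have hDv3pos : (0:ℝ) < Dv3 := by
      rw [hDv3]; exact_mod_cast sphere_pos hq htree hreg v (m + 3)
    have hDueq : Du = (q:ℝ) * Dv1 := by
      rw [hDu, hDv1, (sphere_card htree hreg u (m + 1)).2, (sphere_card htree hreg v m).2]
      push_cast
      ring
    have hDv3eq : Dv3 = (q:ℝ) * Du := by
      rw [hDu, hDv3, (sphere_card htree hreg u (m + 1)).2, (sphere_card htree hreg v (m + 2)).2]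
      push_cast
      ring
    have h1 : (q:ℝ)⁻¹ * (B / Dv1) = B / Du := by
      rw [hDueq]
      field_simp
    have h2 : (q:ℝ) * (C / Dv3) = C / Du := by
      rw [hDv3eq]
      field_simp
    show A / Du ≤ (q:ℝ)⁻¹ * (B / Dv1) + (q:ℝ) * (C / Dv3)
    rw [h1, h2, ← add_div]
    gcongr
    rw [hA, hB, hC]
    exact_mod_cast hcardle
  -- epsilon argument
  have main : ∀ ε : ℝ, 0 < ε → Filter.limsup f Filter.atTop ≤ ((q:ℝ) + (q:ℝ)⁻¹) * (L + ε) := by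
    intro ε hε
    have hev : ∀ᶠ n in Filter.atTop, g n < L + ε :=
      Filter.eventually_lt_of_limsup_lt (by rw [← hL]; linarith) hgb
    obtain ⟨N, hN⟩ := Filter.eventually_atTop.mp hev
    apply Filter.limsup_le_of_le hfc
    filter_upwards [Filter.eventually_ge_atTop (N + 2)] with n hn
    obtain ⟨m, rfl⟩ : ∃ m, n = m + 2 := ⟨n - 2, by omega⟩
    have hg1 : g (m + 1) ≤ L + ε := (hN (m + 1) (by omega)).le
    have hg3 : g (m + 3) ≤ L + ε := (hN (m + 3) (by omega)).le
    have hg1' : 0 ≤ g (m + 1) := f_nonneg G X v (m + 1)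
    calc f (m + 2) ≤ (q:ℝ)⁻¹ * g (m + 1) + (q:ℝ) * g (m + 3) := key m
      _ ≤ (q:ℝ)⁻¹ * (L + ε) + (q:ℝ) * (L + ε) := by
          have hqi : (0:ℝ) ≤ (q:ℝ)⁻¹ := by positivity
          have e1 := mul_le_mul_of_nonneg_left hg1 hqi
          have e2 := mul_le_mul_of_nonneg_left hg3 hq0.le
          linarith
      _ = ((q:ℝ) + (q:ℝ)⁻¹) * (L + ε) := by ring
  have hCpos : (0:ℝ) < (q:ℝ) + (q:ℝ)⁻¹ := by positivity
  have : Filter.limsup f Filter.atTop ≤ ((q:ℝ) + (q:ℝ)⁻¹) * L := by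
    apply le_of_forall_pos_le_add
    intro δ hδ
    have h := main (δ / ((q:ℝ) + (q:ℝ)⁻¹)) (by positivity)
    have heq : ((q:ℝ) + (q:ℝ)⁻¹) * (L + δ / ((q:ℝ) + (q:ℝ)⁻¹)) =
        ((q:ℝ) + (q:ℝ)⁻¹) * L + δ := by
      field_simp
    linarith
  rw [hfdef, hLdef]
  exact this

end Analysis
/-- Positive upper density at some vertex implies positive upper density at every
vertex; in fact `d*(X,y) ≥ (2(q+q⁻¹))^{-d(x,y)} d*(X,x)`. -/
theorem stmt1 {V : Type*} (q : ℕ) (hq : 2 ≤ q) (G : SimpleGraph V)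
    (htree : G.IsTree) (hreg : ∀ v : V, (G.neighborSet v).ncard = q + 1)
    (X : Set V) (x : V) (hx : 0 < upperDensityAt G X x) :
    ∀ y : V, 0 < upperDensityAt G X y ∧
      ((2 * ((q : ℝ) + (q : ℝ)⁻¹)) ^ (G.dist x y))⁻¹ * upperDensityAt G X x ≤
        upperDensityAt G X y := by
  have hq0 : (0:ℝ) < (q:ℝ) := by exact_mod_cast Nat.lt_of_lt_of_le Nat.zero_lt_two hq
  have hCpos : (0:ℝ) < 2 * ((q:ℝ) + (q:ℝ)⁻¹) := by positivity
  have key : ∀ n : ℕ, ∀ y : V, G.dist x y = n →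
      upperDensityAt G X x ≤ (2 * ((q:ℝ) + (q:ℝ)⁻¹)) ^ n * upperDensityAt G X y := by
    intro n
    induction n with
    | zero =>
      intro y hy
      have hxy : x = y := htree.isConnected.dist_eq_zero_iff.mp hy
      subst hxy
      simp
    | succ n ih =>
      intro y hy
      obtain ⟨z, hz, hzd⟩ := exists_parent htree.isConnected hy
      have h1 : upperDensityAt G X x ≤
          (2 * ((q:ℝ) + (q:ℝ)⁻¹)) ^ n * upperDensityAt G X z := ih z hzd
      have h2 : upperDensityAt G X z ≤
          (2 * ((q:ℝ) + (q:ℝ)⁻¹)) * upperDensityAt G X y := by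
        have he := edge_step hq htree hreg X hz
        have hy0 : 0 ≤ upperDensityAt G X y := density_nonneg htree hreg X y
        nlinarith [density_nonneg htree hreg X y]
      calc upperDensityAt G X x
          ≤ (2 * ((q:ℝ) + (q:ℝ)⁻¹)) ^ n * upperDensityAt G X z := h1
        _ ≤ (2 * ((q:ℝ) + (q:ℝ)⁻¹)) ^ n *
              ((2 * ((q:ℝ) + (q:ℝ)⁻¹)) * upperDensityAt G X y) :=
            mul_le_mul_of_nonneg_left h2 (by positivity)
        _ = (2 * ((q:ℝ) + (q:ℝ)⁻¹)) ^ (n + 1) * upperDensityAt G X y := by ring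
  intro y
  have hd := key (G.dist x y) y rfl
  have hpow : (0:ℝ) < (2 * ((q:ℝ) + (q:ℝ)⁻¹)) ^ (G.dist x y) := by positivity
  have hypos : 0 < upperDensityAt G X y := by
    by_contra hneg
    push_neg at hneg
    nlinarith
  refine ⟨hypos, ?_⟩
  rw [inv_mul_le_iff₀ hpow]
  exact hd.trans_eq rfl
end

section
/- Let $T_q$ be the homogeneous tree of degree $q+1\geq 3$ with root $o$. Fix $n > t \geq t_1 \geq 1$ and $X \subseteq V$. Suppose there exist no vertices $x,y \in X$ with $d(o,x)=d(o,y)$ and $d(x,y)=2t_1$. Then for each vertex $v$ with $d(o,v)=n-t$, among the sets $C(u,t_1-1)$ with $u$ a descendant of $v$ at distance $n-t_1+1$ from $o$ (the atoms of level $t_1-1$ inside the descendants of $v$ on the sphere $S_n$), the proportion that intersect $X$ nontrivially is at most $q^{-1}$. -/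
open SimpleGraph Walk

section TreeAux
variable {V : Type*} {G : SimpleGraph V}

/-- In a tree, every path realizes the distance. -/
lemma tree_path_length (htree : G.IsTree) {a b : V} (p : G.Walk a b) (hp : p.IsPath) :
    p.length = G.dist a b := by
  obtain ⟨q, hq, hql⟩ := htree.isConnected.exists_path_of_dist a b
  rw [(htree.existsUnique_path a b).unique hp hq, hql]

lemma betweenness (hconn : G.Connected) {a b y : V} (p : G.Walk a b)
    (hl : p.length = G.dist a b) (hy : y ∈ p.support) :
    G.dist a y + G.dist y b = G.dist a b := by
  classical
  have h1 : G.dist a y ≤ (p.takeUntil y hy).length := SimpleGraph.dist_le _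
  have h2 : G.dist y b ≤ (p.dropUntil y hy).length := SimpleGraph.dist_le _
  have h3 : (p.takeUntil y hy).length + (p.dropUntil y hy).length = p.length := by
    rw [← Walk.length_append, Walk.take_spec]
  have h4 := hconn.dist_triangle (u := a) (v := y) (w := b)
  omega

lemma adj_depth_ne (htree : G.IsTree) (o : V) {a b : V} (hab : G.Adj a b) :
    G.dist o a ≠ G.dist o b := by
  intro h
  have hone : G.dist b a = 1 := SimpleGraph.dist_eq_one_iff_adj.mpr hab.symm
  obtain ⟨p, hp, hl⟩ := htree.isConnected.exists_path_of_dist o a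
  by_cases hb : b ∈ p.support
  · have := betweenness htree.isConnected p hl hb
    omega
  · have hpath : (p.concat hab).IsPath := by
      rw [← Walk.isPath_reverse_iff, Walk.reverse_concat, Walk.cons_isPath_iff]
      refine ⟨hp.reverse, ?_⟩
      rw [Walk.support_reverse, List.mem_reverse]
      exact hb
    have := tree_path_length htree _ hpath
    rw [Walk.length_concat, hl] at this
    omega

lemma step_down (hconn : G.Connected) (o : V) {a x : V} {k : ℕ}
    (hd : G.dist a x = k + 1) (hb : G.dist o x = G.dist o a + (k + 1)) :
    ∃ y, G.Adj x y ∧ G.dist a y = k ∧ G.dist o y = G.dist o a + k := by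
  obtain ⟨p, hl⟩ := hconn.exists_walk_length_eq_dist a x
  rw [hd] at hl
  have hlrev : p.reverse.length = k + 1 := by rw [Walk.length_reverse, hl]
  cases hrev : p.reverse with
  | nil => rw [hrev] at hlrev; simp at hlrev
  | cons h q =>
    rename_i y
    rw [hrev] at hlrev
    simp only [Walk.length_cons] at hlrev
    have hq : G.dist y a ≤ k := by
      have := SimpleGraph.dist_le q
      omega
    have hay : G.dist a y ≤ k := by rwa [SimpleGraph.dist_comm]
    have h1 : G.dist x y = 1 := SimpleGraph.dist_eq_one_iff_adj.mpr h
    have t1 : G.dist a x ≤ G.dist a y + G.dist y x := hconn.dist_triangle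
    have t2 : G.dist o x ≤ G.dist o y + G.dist y x := hconn.dist_triangle
    have t3 : G.dist o y ≤ G.dist o a + G.dist a y := hconn.dist_triangle
    have hyx : G.dist y x = 1 := by rwa [SimpleGraph.dist_comm]
    exact ⟨y, h, by omega, by omega⟩

lemma parent_unique_s3 (htree : G.IsTree) (o : V) {x y₁ y₂ : V} {m : ℕ}
    (hx : G.dist o x = m + 1) (h₁ : G.Adj x y₁) (hd₁ : G.dist o y₁ = m)
    (h₂ : G.Adj x y₂) (hd₂ : G.dist o y₂ = m) : y₁ = y₂ := by
  obtain ⟨p₁, hp₁, hl₁⟩ := htree.isConnected.exists_path_of_dist o y₁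
  obtain ⟨p₂, hp₂, hl₂⟩ := htree.isConnected.exists_path_of_dist o y₂
  have hx₁ : x ∉ p₁.support := by
    intro hmem
    have := betweenness htree.isConnected p₁ hl₁ hmem
    have : G.dist x y₁ = 1 := SimpleGraph.dist_eq_one_iff_adj.mpr h₁
    omega
  have hx₂ : x ∉ p₂.support := by
    intro hmem
    have := betweenness htree.isConnected p₂ hl₂ hmem
    have : G.dist x y₂ = 1 := SimpleGraph.dist_eq_one_iff_adj.mpr h₂
    omega
  have hq₁ : (p₁.concat h₁.symm).IsPath := by
    rw [← Walk.isPath_reverse_iff, Walk.reverse_concat, Walk.cons_isPath_iff]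
    exact ⟨hp₁.reverse, by rwa [Walk.support_reverse, List.mem_reverse]⟩
  have hq₂ : (p₂.concat h₂.symm).IsPath := by
    rw [← Walk.isPath_reverse_iff, Walk.reverse_concat, Walk.cons_isPath_iff]
    exact ⟨hp₂.reverse, by rwa [Walk.support_reverse, List.mem_reverse]⟩
  have heq := (htree.existsUnique_path o x).unique hq₁ hq₂
  have hrev : (p₁.concat h₁.symm).reverse = (p₂.concat h₂.symm).reverse := by rw [heq]
  rw [Walk.reverse_concat, Walk.reverse_concat] at hrev
  have hsupp := congrArg Walk.support hrev
  rw [Walk.support_cons, Walk.support_cons] at hsupp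
  have htails : p₁.reverse.support = p₂.reverse.support := by
    simpa using hsupp
  have hh₁ : p₁.reverse.support = y₁ :: p₁.reverse.support.tail := Walk.support_eq_cons _
  have hh₂ : p₂.reverse.support = y₂ :: p₂.reverse.support.tail := Walk.support_eq_cons _
  rw [hh₁, hh₂] at htails
  exact (List.cons.injEq _ _ _ _ ▸ htails).1

lemma below_unique (htree : G.IsTree) (o : V) :
    ∀ (k : ℕ) (u₁ u₂ y : V), G.dist o u₁ = G.dist o u₂ → G.dist u₁ y = k →
    G.dist o y = G.dist o u₁ + k → G.dist o y = G.dist o u₂ + G.dist u₂ y → u₁ = u₂ := by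
  intro k
  induction k with
  | zero =>
    intro u₁ u₂ y hdep h1 h2 h3
    have hy₁ : u₁ = y := (htree.isConnected.dist_eq_zero_iff).mp h1
    have hy₂ : u₂ = y := (htree.isConnected.dist_eq_zero_iff).mp (by omega)
    rw [hy₁, hy₂]
  | succ k ih =>
    intro u₁ u₂ y hdep h1 h2 h3
    have h4 : G.dist u₂ y = k + 1 := by omega
    obtain ⟨y₁, hy₁adj, hy₁d, hy₁o⟩ := step_down htree.isConnected o h1 h2
    obtain ⟨y₂, hy₂adj, hy₂d, hy₂o⟩ := step_down htree.isConnected o h4 (by omega)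
    have hyy : y₁ = y₂ := by
      refine parent_unique_s3 htree o (x := y) (m := G.dist o u₁ + k) (by omega)
        hy₁adj hy₁o hy₂adj (by omega)
    exact ih u₁ u₂ y₁ hdep hy₁d hy₁o (by rw [hyy]; omega)

/-- Key geometric fact: descendants of distinct children of `w` at depth offset `s`
are at distance `2(s+1)` from each other. -/
lemma far_apart (htree : G.IsTree) (o : V) {w u₁ u₂ z₁ z₂ : V} {s : ℕ}
    (ha₁ : G.Adj w u₁) (ha₂ : G.Adj w u₂) (hu : u₁ ≠ u₂)
    (hc₁ : G.dist o u₁ = G.dist o w + 1) (hc₂ : G.dist o u₂ = G.dist o w + 1)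
    (hz₁d : G.dist u₁ z₁ = s) (hz₁o : G.dist o z₁ = G.dist o u₁ + s)
    (hz₂d : G.dist u₂ z₂ = s) (hz₂o : G.dist o z₂ = G.dist o u₂ + s) :
    G.dist z₁ z₂ = 2 * (s + 1) := by
  have hconn := htree.isConnected
  obtain ⟨p₁, hp₁, hl₁⟩ := hconn.exists_path_of_dist u₁ z₁
  obtain ⟨p₂, hp₂, hl₂⟩ := hconn.exists_path_of_dist u₂ z₂
  -- every vertex on p₁ is "below" u₁
  have hbelow₁ : ∀ y ∈ p₁.support, G.dist u₁ y + G.dist y z₁ = s ∧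
      G.dist o y = G.dist o u₁ + G.dist u₁ y := by
    intro y hy
    have hb := betweenness hconn p₁ (by rw [hl₁, hz₁d]) hy
    rw [hz₁d] at hb
    have t1 : G.dist o y ≤ G.dist o u₁ + G.dist u₁ y := hconn.dist_triangle
    have t2 : G.dist o z₁ ≤ G.dist o y + G.dist y z₁ := hconn.dist_triangle
    exact ⟨hb, by omega⟩
  have hbelow₂ : ∀ y ∈ p₂.support, G.dist u₂ y + G.dist y z₂ = s ∧
      G.dist o y = G.dist o u₂ + G.dist u₂ y := by
    intro y hy
    have hb := betweenness hconn p₂ (by rw [hl₂, hz₂d]) hy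
    rw [hz₂d] at hb
    have t1 : G.dist o y ≤ G.dist o u₂ + G.dist u₂ y := hconn.dist_triangle
    have t2 : G.dist o z₂ ≤ G.dist o y + G.dist y z₂ := hconn.dist_triangle
    exact ⟨hb, by omega⟩
  have hw₁ : w ∉ p₁.support := by
    intro hmem
    have := (hbelow₁ w hmem).2
    omega
  have hw₂ : w ∉ p₂.support := by
    intro hmem
    have := (hbelow₂ w hmem).2
    omega
  have hdisj : ∀ y ∈ p₁.support, y ∉ p₂.support := by
    intro y hy₁ hy₂
    have hb₁ := (hbelow₁ y hy₁).2
    have hb₂ := (hbelow₂ y hy₂).2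
    exact hu (below_unique htree o (G.dist u₁ y) u₁ u₂ y (by omega) rfl hb₁ (by omega))
  -- build the walk z₁ → u₁ → w → u₂ → z₂
  set W : G.Walk z₁ z₂ := (Walk.cons ha₁ p₁).reverse.append (Walk.cons ha₂ p₂) with hW
  have hWlen : W.length = 2 * (s + 1) := by
    rw [hW, Walk.length_append, Walk.length_reverse, Walk.length_cons, Walk.length_cons,
      hl₁, hl₂, hz₁d, hz₂d]
    omega
  have hWpath : W.IsPath := by
    rw [Walk.isPath_def, hW, Walk.support_append, Walk.support_reverse, Walk.support_cons,
      Walk.support_cons, List.tail_cons]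
    rw [List.nodup_append]
    refine ⟨?_, hp₂.support_nodup, ?_⟩
    · rw [List.nodup_reverse, List.nodup_cons]
      exact ⟨hw₁, hp₁.support_nodup⟩
    · intro y hy z hy₂ hyz
      subst hyz
      rw [List.mem_reverse, List.mem_cons] at hy
      rcases hy with rfl | hy
      · exact hw₂ hy₂
      · exact hdisj y hy hy₂
  have := tree_path_length htree W hWpath
  omega

end TreeAux

open Filter

/-- The set `C(v,k)` of `k`-descendants of `v` (relative to the root `o`). -/
def descSet {V : Type*} (G : SimpleGraph V) (o v : V) (k : ℕ) : Set V :=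
  {x | G.dist v x = k ∧ G.dist o x = G.dist o v + k}

section Counting

variable {V : Type*} {G : SimpleGraph V}

/-- The set of children of `w` relative to the root `o`. -/
def childSet (G : SimpleGraph V) (o w : V) : Set V :=
  {u | G.Adj w u ∧ G.dist o u = G.dist o w + 1}

lemma neighborSet_finite' {q : ℕ} (hreg : ∀ v : V, (G.neighborSet v).ncard = q + 1) (w : V) :
    (G.neighborSet w).Finite :=
  Set.finite_of_ncard_ne_zero (by rw [hreg]; omega)

lemma childSet_finite {q : ℕ} (hreg : ∀ v : V, (G.neighborSet v).ncard = q + 1) (o w : V) :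
    (childSet G o w).Finite :=
  (neighborSet_finite' hreg w).subset fun u hu => hu.1

lemma childSet_ncard {q : ℕ} (htree : G.IsTree)
    (hreg : ∀ v : V, (G.neighborSet v).ncard = q + 1) (o w : V) (hw : 1 ≤ G.dist o w) :
    (childSet G o w).ncard = q := by
  have hconn := htree.isConnected
  obtain ⟨m, hm⟩ : ∃ m, G.dist o w = m + 1 := ⟨G.dist o w - 1, by omega⟩
  obtain ⟨y, hyadj, hyd, hyo⟩ := step_down hconn o (a := o) (x := w) (k := m) hm
    (by rw [SimpleGraph.dist_self]; omega)
  rw [SimpleGraph.dist_self] at hyo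
  have hset : childSet G o w = G.neighborSet w \ {y} := by
    ext u
    simp only [childSet, Set.mem_setOf_eq, Set.mem_diff, SimpleGraph.mem_neighborSet,
      Set.mem_singleton_iff]
    constructor
    · rintro ⟨hadj, hd⟩
      refine ⟨hadj, ?_⟩
      rintro rfl
      omega
    · rintro ⟨hadj, hne⟩
      refine ⟨hadj, ?_⟩
      have h1 : G.dist w u = 1 := SimpleGraph.dist_eq_one_iff_adj.mpr hadj
      have h2 : G.dist u w = 1 := by rwa [SimpleGraph.dist_comm]
      have t1 : G.dist o u ≤ G.dist o w + G.dist w u := hconn.dist_triangle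
      have t2 : G.dist o w ≤ G.dist o u + G.dist u w := hconn.dist_triangle
      have hne' := adj_depth_ne htree o hadj
      rcases (show G.dist o u = m ∨ G.dist o u = G.dist o w + 1 by omega) with h | h
      · exact absurd (parent_unique_s3 htree o (x := w) (m := m) hm hadj h hyadj (by omega)) hne
      · exact h
  have hymem : y ∈ G.neighborSet w := hyadj
  rw [hset, Set.ncard_diff_singleton_of_mem hymem, hreg]
  omega

lemma descSet_zero (hconn : G.Connected) (o v : V) : descSet G o v 0 = {v} := by
  ext x
  simp only [descSet, Set.mem_setOf_eq, Set.mem_singleton_iff, add_zero]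
  constructor
  · rintro ⟨h0, _⟩
    exact (hconn.dist_eq_zero_iff.mp h0).symm
  · rintro rfl
    exact ⟨SimpleGraph.dist_self, rfl⟩

lemma descSet_succ (htree : G.IsTree) (o v : V) (k : ℕ) :
    descSet G o v (k + 1) = ⋃ w ∈ descSet G o v k, childSet G o w := by
  have hconn := htree.isConnected
  ext x
  simp only [descSet, childSet, Set.mem_setOf_eq, Set.mem_iUnion, exists_prop]
  constructor
  · rintro ⟨hd, ho⟩
    obtain ⟨y, hyadj, hyd, hyo⟩ := step_down hconn o hd ho
    exact ⟨y, ⟨hyd, hyo⟩, hyadj.symm, by omega⟩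
  · rintro ⟨w, ⟨hwd, hwo⟩, hadj, hdu⟩
    have h1 : G.dist w x = 1 := SimpleGraph.dist_eq_one_iff_adj.mpr hadj
    have t1 : G.dist v x ≤ G.dist v w + G.dist w x := hconn.dist_triangle
    have t2 : G.dist o x ≤ G.dist o v + G.dist v x := hconn.dist_triangle
    exact ⟨by omega, by omega⟩

lemma descSet_depth {o v x : V} {k : ℕ} (hx : x ∈ descSet G o v k) :
    G.dist o x = G.dist o v + k := hx.2

lemma descSet_finite_card {q : ℕ} (htree : G.IsTree)
    (hreg : ∀ v : V, (G.neighborSet v).ncard = q + 1) (o v : V) (hv : 1 ≤ G.dist o v) :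
    ∀ k, (descSet G o v k).Finite ∧ (descSet G o v k).ncard = q ^ k := by
  classical
  have hconn := htree.isConnected
  intro k
  induction k with
  | zero =>
    rw [descSet_zero hconn]
    exact ⟨Set.finite_singleton v, by simp⟩
  | succ k ih =>
    obtain ⟨hBfin, hBcard⟩ := ih
    rw [descSet_succ htree o v k]
    have hcfin : ∀ w : V, (childSet G o w).Finite := childSet_finite hreg o
    have hkey : (⋃ w ∈ descSet G o v k, childSet G o w) =
        ↑(hBfin.toFinset.biUnion fun w => (hcfin w).toFinset) := by
      rw [Finset.coe_biUnion]
      simp [Set.Finite.coe_toFinset]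
    rw [hkey]
    have hdisj : ∀ w₁ ∈ hBfin.toFinset, ∀ w₂ ∈ hBfin.toFinset, w₁ ≠ w₂ →
        Disjoint ((hcfin w₁).toFinset) ((hcfin w₂).toFinset) := by
      intro w₁ hw₁ w₂ hw₂ hne
      rw [Set.Finite.mem_toFinset] at hw₁ hw₂
      rw [Finset.disjoint_left]
      intro u hu₁ hu₂
      rw [Set.Finite.mem_toFinset] at hu₁ hu₂
      refine hne (parent_unique_s3 htree o (x := u) (m := G.dist o v + k) ?_
        hu₁.1.symm ?_ hu₂.1.symm ?_)
      · rw [hu₁.2, descSet_depth hw₁]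
      · exact descSet_depth hw₁
      · exact descSet_depth hw₂
    refine ⟨Finset.finite_toSet _, ?_⟩
    rw [Set.ncard_coe_finset, Finset.card_biUnion hdisj]
    have hcard : ∀ w ∈ hBfin.toFinset, ((hcfin w).toFinset).card = q := by
      intro w hw
      rw [Set.Finite.mem_toFinset] at hw
      rw [← Set.ncard_eq_toFinset_card _ (hcfin w)]
      exact childSet_ncard htree hreg o w (by have := descSet_depth hw; omega)
    rw [Finset.sum_congr rfl hcard, Finset.sum_const, smul_eq_mul]
    have hB : hBfin.toFinset.card = q ^ k := by
      rw [← Set.ncard_eq_toFinset_card _ hBfin, hBcard]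
    rw [hB, pow_succ]

end Counting

/-- Claim 1 of Proposition 1: if no two points of `X` equidistant from the root are at
distance `2t₁`, then for each vertex `v` at depth `n - t`, the proportion of the atoms
`C(u, t₁-1)` (with `u` a descendant of `v` at depth `n - t₁ + 1`) meeting `X`
is at most `q⁻¹`. -/
theorem stmt3 {V : Type*} (q : ℕ) (hq : 2 ≤ q) (G : SimpleGraph V)
    (htree : G.IsTree) (hreg : ∀ v : V, (G.neighborSet v).ncard = q + 1)
    (o : V) (X : Set V) (n t t₁ : ℕ) (h1 : 1 ≤ t₁) (h2 : t₁ ≤ t) (h3 : t < n)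
    (hno : ¬ ∃ x ∈ X, ∃ y ∈ X, G.dist o x = G.dist o y ∧ G.dist x y = 2 * t₁)
    (v : V) (hv : G.dist o v = n - t) :
    ({u ∈ descSet G o v (t - t₁ + 1) | (X ∩ descSet G o u (t₁ - 1)).Nonempty}.ncard : ℝ) ≤
      (q : ℝ)⁻¹ * ((descSet G o v (t - t₁ + 1)).ncard : ℝ) := by
  classical
  have hconn := htree.isConnected
  have hvd : 1 ≤ G.dist o v := by omega
  set k := t - t₁ with hk
  obtain ⟨hBfin, hBcard⟩ := descSet_finite_card htree hreg o v hvd k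
  obtain ⟨hAfin, hAcard⟩ := descSet_finite_card htree hreg o v hvd (k + 1)
  have hstep := descSet_succ htree o v k
  -- the parent map
  set f : V → V := fun u =>
    if h : ∃ w, w ∈ descSet G o v k ∧ u ∈ childSet G o w then h.choose else u with hfdef
  have hf : ∀ u ∈ descSet G o v (k + 1),
      f u ∈ descSet G o v k ∧ u ∈ childSet G o (f u) := by
    intro u hu
    rw [hstep] at hu
    simp only [Set.mem_iUnion, exists_prop] at hu
    rw [hfdef]
    simp only
    rw [dif_pos hu]
    exact hu.choose_spec
  set bad := {u ∈ descSet G o v (k + 1) | (X ∩ descSet G o u (t₁ - 1)).Nonempty} with hbad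
  have hinj : Set.InjOn f bad := by
    intro u₁ hu₁ u₂ hu₂ hfeq
    by_contra hne
    obtain ⟨hw₁, hc₁⟩ := hf u₁ hu₁.1
    obtain ⟨hw₂, hc₂⟩ := hf u₂ hu₂.1
    rw [hfeq] at hc₁ hw₁
    obtain ⟨z₁, hz₁X, hz₁d⟩ := hu₁.2
    obtain ⟨z₂, hz₂X, hz₂d⟩ := hu₂.2
    have hfar := far_apart htree o (w := f u₂) (s := t₁ - 1) hc₁.1 hc₂.1 hne
      hc₁.2 hc₂.2 hz₁d.1 hz₁d.2 hz₂d.1 hz₂d.2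
    refine hno ⟨z₁, hz₁X, z₂, hz₂X, ?_, by omega⟩
    have e₁ := hz₁d.2
    have e₂ := hz₂d.2
    have e₃ := hc₁.2
    have e₄ := hc₂.2
    omega
  have hmaps : ∀ u ∈ bad, f u ∈ descSet G o v k := fun u hu => (hf u hu.1).1
  have hcount : bad.ncard ≤ (descSet G o v k).ncard :=
    Set.ncard_le_ncard_of_injOn f hmaps hinj hBfin
  have hqpos : (0 : ℝ) < (q : ℝ) := by exact_mod_cast (show 0 < q by omega)
  calc (bad.ncard : ℝ) ≤ ((q ^ k : ℕ) : ℝ) := by exact_mod_cast hcount.trans_eq hBcard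
    _ = (q : ℝ)⁻¹ * ((q ^ (k + 1) : ℕ) : ℝ) := by
        push_cast [pow_succ]
        field_simp
    _ = (q : ℝ)⁻¹ * ((descSet G o v (k + 1)).ncard : ℝ) := by rw [hAcard]
end

section
/- Let $0 < \epsilon < 1/4$ and $A = \{n \in \mathbb{Z} : \{n\sqrt{2}\} < \epsilon\}$. Then the set $(A-A)+(A-A) = \{a - b + c - d : a,b,c,d \in A\}$ has density $4\epsilon < 1$; in particular it is a proper subset of $\mathbb{Z}$. -/
open Filter

section helpers

-- density lemma
theorem frac_dense (α : ℝ) (hirr : Irrational α) (u v : ℝ) (hu : 0 ≤ u) (huv : u < v) (hv : v ≤ 1) :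
    ∃ a : ℤ, u < Int.fract ((a:ℝ) * α) ∧ Int.fract ((a:ℝ) * α) < v := by
  have hd : Dense ((AddSubgroup.closure {1, α} : AddSubgroup ℝ) : Set ℝ) := by
    rcases AddSubgroup.dense_or_cyclic (AddSubgroup.closure {1, α}) with h | ⟨g, hg⟩
    · exact h
    · exfalso
      have h1 : (1:ℝ) ∈ AddSubgroup.closure ({1, α} : Set ℝ) :=
        AddSubgroup.subset_closure (by simp)
      have h2 : α ∈ AddSubgroup.closure ({1, α} : Set ℝ) :=
        AddSubgroup.subset_closure (by simp)
      rw [hg, AddSubgroup.mem_closure_singleton] at h1 h2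
      obtain ⟨m, hm⟩ := h1
      obtain ⟨n, hn⟩ := h2
      have hm0 : m ≠ 0 := by rintro rfl; simp at hm
      have hg0 : g ≠ 0 := by rintro rfl; simp at hm
      apply hirr
      refine ⟨(n : ℚ) / m, ?_⟩
      push_cast
      rw [div_eq_iff (by exact_mod_cast hm0)]
      rw [zsmul_eq_mul] at hm hn
      linear_combination (m:ℝ) * hn - (n:ℝ) * hm
  obtain ⟨s, hs, hsu, hsv⟩ := hd.exists_between huv
  rw [SetLike.mem_coe, AddSubgroup.mem_closure_pair] at hs
  obtain ⟨m, n, hmn⟩ := hs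
  refine ⟨n, ?_, ?_⟩ <;>
  · have : Int.fract ((n:ℝ) * α) = s := by
      have : (n:ℝ) * α = s - m := by
        rw [← hmn]; push_cast [zsmul_eq_mul]; ring
      rw [this, Int.fract_sub_intCast, Int.fract_eq_self.2 ⟨by linarith, by linarith⟩]
    rw [this]
    assumption

theorem split_lemma (α : ℝ) (hirr : Irrational α) (ε : ℝ) (h0 : 0 < ε) (h1 : ε < 1/4)
    (n : ℤ) (hn : Int.fract ((n:ℝ) * α) < 2*ε) :
    ∃ a : ℤ, Int.fract ((a:ℝ)*α) < ε ∧ ∃ c : ℤ, Int.fract ((c:ℝ)*α) < ε ∧ n = a + c := by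
  set t := Int.fract ((n:ℝ) * α) with ht
  rcases eq_or_lt_of_le (Int.fract_nonneg ((n:ℝ) * α)) with h | h
  · exact ⟨n, by rw [← h]; exact h0, 0, by simpa using h0, by ring⟩
  · obtain ⟨a, ha1, ha2⟩ := frac_dense α hirr (max (t - ε) 0) (min t ε)
      (le_max_right _ _)
      (max_lt (lt_min (by linarith) (by linarith)) (lt_min h h0))
      (le_trans (min_le_right _ _) (by linarith))
    refine ⟨a, lt_of_lt_of_le ha2 (min_le_right _ _), n - a, ?_, by ring⟩
    have key : ((n - a : ℤ) : ℝ) * α = (t - Int.fract ((a:ℝ)*α)) + ((⌊(n:ℝ)*α⌋ - ⌊(a:ℝ)*α⌋ : ℤ) : ℝ) := by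
      push_cast
      rw [ht]
      unfold Int.fract
      ring
    have hu := lt_of_le_of_lt (le_max_left (t-ε) 0) ha1
    have hv := lt_of_lt_of_le ha2 (min_le_left t ε)
    rw [key, Int.fract_add_intCast, Int.fract_eq_self.2 ⟨by linarith, by linarith⟩]
    linarith

theorem B_char (α : ℝ) (hirr : Irrational α) (ε : ℝ) (h0 : 0 < ε) (h1 : ε < 1/4)
    (A B : Set ℤ)
    (hA : A = {n : ℤ | Int.fract ((n : ℝ) * α) < ε})
    (hB : B = {n : ℤ | ∃ a ∈ A, ∃ b ∈ A, ∃ c ∈ A, ∃ d ∈ A, n = a - b + c - d}) :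
    B = {n : ℤ | Int.fract ((n : ℝ) * α) < 2*ε ∨ 1 - 2*ε < Int.fract ((n : ℝ) * α)} := by
  subst hA hB
  ext n
  simp only [Set.mem_setOf_eq]
  constructor
  · rintro ⟨a, ha, b, hb, c, hc, d, hd, rfl⟩
    set fa := Int.fract ((a:ℝ)*α)
    set fb := Int.fract ((b:ℝ)*α)
    set fc := Int.fract ((c:ℝ)*α)
    set fd := Int.fract ((d:ℝ)*α)
    have hfa := Int.fract_nonneg ((a:ℝ)*α)
    have hfb := Int.fract_nonneg ((b:ℝ)*α)
    have hfc := Int.fract_nonneg ((c:ℝ)*α)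
    have hfd := Int.fract_nonneg ((d:ℝ)*α)
    have key : ((a - b + c - d : ℤ) : ℝ) * α
        = (fa - fb + fc - fd) + ((⌊(a:ℝ)*α⌋ - ⌊(b:ℝ)*α⌋ + ⌊(c:ℝ)*α⌋ - ⌊(d:ℝ)*α⌋ : ℤ) : ℝ) := by
      push_cast
      unfold fa fb fc fd
      unfold Int.fract
      ring
    rw [key, Int.fract_add_intCast]
    rcases le_or_gt 0 (fa - fb + fc - fd) with h | h
    · left
      rw [Int.fract_eq_self.2 ⟨h, by linarith⟩]
      linarith
    · right
      have hfl : ⌊fa - fb + fc - fd⌋ = -1 :=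
        Int.floor_eq_iff.2 ⟨by push_cast; linarith, by push_cast; linarith⟩
      have : Int.fract (fa - fb + fc - fd) = fa - fb + fc - fd + 1 := by
        unfold Int.fract
        rw [hfl]
        push_cast
        ring
      rw [this]
      linarith
  · intro h
    rcases h with h | h
    · obtain ⟨a, ha, c, hc, hn⟩ := split_lemma α hirr ε h0 h1 n h
      exact ⟨a, ha, 0, by simpa using h0, c, hc, 0, by simpa using h0, by omega⟩
    · have hne : Int.fract ((n:ℝ)*α) ≠ 0 := by intro h'; rw [h'] at h; linarith
      have h2 : Int.fract (((-n : ℤ):ℝ) * α) < 2*ε := by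
        push_cast
        rw [neg_mul, Int.fract_neg hne]
        linarith
      obtain ⟨a, ha, c, hc, hn⟩ := split_lemma α hirr ε h0 h1 (-n) h2
      exact ⟨0, by simpa using h0, a, ha, 0, by simpa using h0, c, hc, by omega⟩

noncomputable def cnt (α β : ℝ) (a b : ℤ) : ℕ :=
  ((Finset.Ioc a b).filter (fun n : ℤ => Int.fract ((n:ℝ)*α) < β)).card

theorem mem_cnt {α β : ℝ} {a b n : ℤ} :
    n ∈ (Finset.Ioc a b).filter (fun n : ℤ => Int.fract ((n:ℝ)*α) < β) ↔
      a < n ∧ n ≤ b ∧ Int.fract ((n:ℝ)*α) < β := by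
  rw [Finset.mem_filter, Finset.mem_Ioc, and_assoc]

theorem block_count (α β : ℝ) (hβ0 : 0 ≤ β) (hβ1 : β ≤ 1) (p q : ℤ) (hq : 0 < q)
    (hcop : IsCoprime p q) (hθ : |(q:ℝ)*α - p| ≤ 1/q) (a : ℤ) :
    (q:ℝ)*β - 2 ≤ (cnt α β a (a+q) : ℝ) ∧ (cnt α β a (a+q) : ℝ) ≤ (q:ℝ)*β + 2 := by
  have hq1 : (1:ℝ) ≤ (q:ℝ) := by exact_mod_cast hq
  have hqR : (0:ℝ) < q := by linarith
  set θ : ℝ := (q:ℝ)*α - p with hθdef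
  set c0 : ℝ := min (((a:ℝ)+1)*θ) (((a:ℝ)+(q:ℝ))*θ) with hc0
  set c1 : ℝ := max (((a:ℝ)+1)*θ) (((a:ℝ)+(q:ℝ))*θ) with hc1
  have habs := abs_le.1 hθ
  have hgap : c1 ≤ c0 + 1 := by
    have h1 : c1 - c0 = |(((a:ℝ)+1)*θ) - (((a:ℝ)+(q:ℝ))*θ)| := by
      rw [hc0, hc1, max_sub_min_eq_abs, abs_sub_comm]
    have h2 : (((a:ℝ)+1)*θ) - (((a:ℝ)+(q:ℝ))*θ) = (1-(q:ℝ))*θ := by ring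
    have h3 : |(1-(q:ℝ))*θ| = ((q:ℝ)-1) * |θ| := by
      rw [abs_mul, abs_of_nonpos (by linarith : (1:ℝ)-(q:ℝ) ≤ 0)]
      ring_nf
    have h4 : ((q:ℝ)-1) * |θ| ≤ 1 := by
      calc ((q:ℝ)-1) * |θ| ≤ ((q:ℝ)-1) * (1/q) := by
            apply mul_le_mul_of_nonneg_left hθ (by linarith)
        _ ≤ 1 := by rw [mul_one_div, div_le_one hqR]; linarith
    rw [h2, h3] at h1
    linarith
  have hkey : ∀ n : ℤ, a < n → n ≤ a + q → c0 ≤ (n:ℝ)*θ ∧ (n:ℝ)*θ ≤ c1 := by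
    intro n h1 h2
    have h1' : ((a:ℝ)+1) ≤ (n:ℝ) := by exact_mod_cast h1
    have h2' : (n:ℝ) ≤ (a:ℝ)+(q:ℝ) := by exact_mod_cast h2
    rcases le_or_gt 0 θ with hs | hs
    · exact ⟨le_trans (min_le_left _ _) (by nlinarith),
        le_trans (by nlinarith) (le_max_right _ _)⟩
    · exact ⟨le_trans (min_le_right _ _) (by nlinarith),
        le_trans (by nlinarith) (le_max_left _ _)⟩
  set T := (Finset.Ioc a (a+q)).filter (fun n : ℤ => Int.fract ((n:ℝ)*α) < β) with hT
  constructor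
  · -- lower bound
    rcases le_or_gt ((q:ℝ)*β - 2) 0 with h | h
    · exact le_trans h (Nat.cast_nonneg _)
    obtain ⟨u, v, huv⟩ := hcop
    set S := Finset.Ioc ⌊-((q:ℝ)*β) + c0 + 1⌋ ⌊c0⌋ with hS
    set g : ℤ → ℤ := fun m => a + 1 + ((-(u*m) - (a+1)) % q) with hg
    have hgrange : ∀ m : ℤ, a < g m ∧ g m ≤ a + q := by
      intro m
      have h1 := Int.emod_nonneg (-(u*m) - (a+1)) (ne_of_gt hq)
      have h2 := Int.emod_lt_of_pos (-(u*m) - (a+1)) hq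
      constructor <;> (rw [hg]; simp only; omega)
    have hgdvd : ∀ m : ℤ, q ∣ m + p * g m := by
      intro m
      set w : ℤ := -(u*m) - (a+1) with hw
      refine ⟨m*v - p*(w/q), ?_⟩
      have hmod : w % q = w - q * (w/q) := by rw [Int.emod_def]
      rw [hg]
      simp only
      rw [hmod, hw]
      linear_combination (-m) * huv
    have hmaps : ∀ m ∈ S, g m ∈ T := by
      intro m hm
      rw [hS, Finset.mem_Ioc] at hm
      have hm1 : -((q:ℝ)*β) + c0 + 1 < (m:ℝ) := Int.floor_lt.1 hm.1
      have hm2 : (m:ℝ) ≤ c0 := Int.le_floor.1 hm.2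
      obtain ⟨hn1, hn2⟩ := hgrange m
      obtain ⟨k, hk⟩ := hgdvd m
      have hk' : (m:ℝ) + (p:ℝ)*((g m : ℤ):ℝ) = (q:ℝ)*(k:ℝ) := by exact_mod_cast congrArg (Int.cast : ℤ → ℝ) hk
      have hnθ := hkey (g m) hn1 hn2
      have hid : (q:ℝ)*((k:ℝ) - ((g m : ℤ):ℝ)*α) = (m:ℝ) - ((g m : ℤ):ℝ)*θ := by
        rw [hθdef]; nlinarith [hk']
      have hkle : (k:ℝ) ≤ ((g m : ℤ):ℝ)*α := by nlinarith [hnθ.1]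
      have hklt : ((g m : ℤ):ℝ)*α - (k:ℝ) < β := by nlinarith [hnθ.2, hgap]
      have hfloor : k ≤ ⌊((g m : ℤ):ℝ)*α⌋ := Int.le_floor.2 hkle
      have hfr : Int.fract (((g m : ℤ):ℝ)*α) < β := by
        have heq : Int.fract (((g m : ℤ):ℝ)*α) = ((g m : ℤ):ℝ)*α - ⌊((g m : ℤ):ℝ)*α⌋ := rfl
        have hfl : ((k:ℝ)) ≤ (⌊((g m : ℤ):ℝ)*α⌋ : ℝ) := by exact_mod_cast hfloor
        rw [heq]
        linarith
      rw [hT]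
      exact mem_cnt.2 ⟨hn1, hn2, hfr⟩
    have hinj : Set.InjOn g ↑S := by
      intro m₁ hm₁ m₂ hm₂ heq
      rw [Finset.mem_coe, hS, Finset.mem_Ioc] at hm₁ hm₂
      obtain ⟨k₁, hk₁⟩ := hgdvd m₁
      obtain ⟨k₂, hk₂⟩ := hgdvd m₂
      have hdvd : q ∣ m₁ - m₂ := ⟨k₁ - k₂, by rw [heq] at hk₁; linear_combination hk₁ - hk₂⟩
      have hr1 : (m₁:ℝ) ≤ c0 := Int.le_floor.1 hm₁.2
      have hr2 : -((q:ℝ)*β) + c0 + 1 < (m₂:ℝ) := Int.floor_lt.1 hm₂.1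
      have hr1' : (m₂:ℝ) ≤ c0 := Int.le_floor.1 hm₂.2
      have hr2' : -((q:ℝ)*β) + c0 + 1 < (m₁:ℝ) := Int.floor_lt.1 hm₁.1
      have hqβ : (q:ℝ)*β ≤ q := by nlinarith
      have habs' : |m₁ - m₂| < q := by
        rw [abs_lt]
        constructor
        · have : -(q:ℝ) < (m₁:ℝ) - (m₂:ℝ) := by linarith
          exact_mod_cast (by push_cast; linarith : ((-q : ℤ):ℝ) < ((m₁ - m₂ : ℤ):ℝ))
        · exact_mod_cast (by push_cast; linarith : ((m₁ - m₂ : ℤ):ℝ) < ((q : ℤ):ℝ))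
      have := Int.eq_zero_of_abs_lt_dvd hdvd habs'
      omega
    have hcard : S.card ≤ T.card := Finset.card_le_card_of_injOn g hmaps hinj
    have hScard : S.card = (⌊c0⌋ - ⌊-((q:ℝ)*β) + c0 + 1⌋).toNat := by
      rw [hS, Int.card_Ioc]
    have hf1 : (⌊c0⌋ : ℝ) > c0 - 1 := by linarith [Int.lt_floor_add_one c0]
    have hf2 : (⌊-((q:ℝ)*β) + c0 + 1⌋ : ℝ) ≤ -((q:ℝ)*β) + c0 + 1 := Int.floor_le _
    have hge : ((⌊c0⌋ - ⌊-((q:ℝ)*β) + c0 + 1⌋ : ℤ) : ℝ) ≥ (q:ℝ)*β - 2 := by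
      push_cast
      linarith
    have htn : ((⌊c0⌋ - ⌊-((q:ℝ)*β) + c0 + 1⌋ : ℤ) : ℝ) ≤ (((⌊c0⌋ - ⌊-((q:ℝ)*β) + c0 + 1⌋).toNat : ℤ) : ℝ) := by
      exact_mod_cast Int.self_le_toNat _
    have hS2 : ((q:ℝ)*β - 2) ≤ (S.card : ℝ) := by
      rw [hScard]
      have : (((⌊c0⌋ - ⌊-((q:ℝ)*β) + c0 + 1⌋).toNat : ℕ) : ℝ) = (((⌊c0⌋ - ⌊-((q:ℝ)*β) + c0 + 1⌋).toNat : ℤ) : ℝ) := by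
        push_cast
        ring
      rw [this]
      linarith
    calc (q:ℝ)*β - 2 ≤ (S.card:ℝ) := hS2
      _ ≤ (T.card:ℝ) := by exact_mod_cast hcard
  · -- upper bound
    set f : ℤ → ℤ := fun n => q * ⌊(n:ℝ)*α⌋ - p*n with hf
    have hmaps : ∀ n ∈ T, f n ∈ Finset.Ioc ⌊-((q:ℝ)*β) + c0⌋ ⌊c1⌋ := by
      intro n hn
      rw [hT] at hn
      obtain ⟨hn1, hn2, hfr⟩ := mem_cnt.1 hn
      have hnθ := hkey n hn1 hn2
      have hfr0 : 0 ≤ Int.fract ((n:ℝ)*α) := Int.fract_nonneg _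
      have hfloordef : ((⌊(n:ℝ)*α⌋:ℤ):ℝ) = (n:ℝ)*α - Int.fract ((n:ℝ)*α) := by
        rw [Int.self_sub_fract]
      have hval : ((f n : ℤ):ℝ) = (q:ℝ)*((n:ℝ)*α - Int.fract ((n:ℝ)*α)) - (p:ℝ)*(n:ℝ) := by
        rw [hf]; push_cast; try rw [hfloordef]; try ring
      have hval2 : ((f n : ℤ):ℝ) = (n:ℝ)*θ - (q:ℝ)*Int.fract ((n:ℝ)*α) := by
        rw [hval, hθdef]; ring
      rw [Finset.mem_Ioc]
      constructor
      · rw [Int.floor_lt]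
        have : (q:ℝ)*Int.fract ((n:ℝ)*α) < (q:ℝ)*β := by
          apply mul_lt_mul_of_pos_left hfr hqR
        rw [hval2]
        linarith [hnθ.1, this]
      · rw [Int.le_floor]
        rw [hval2]
        linarith [hnθ.2, mul_nonneg hqR.le hfr0]
    have hinj : Set.InjOn f ↑T := by
      intro n₁ hn₁ n₂ hn₂ heq
      rw [Finset.mem_coe, hT] at hn₁ hn₂
      obtain ⟨h11, h12, _⟩ := mem_cnt.1 hn₁
      obtain ⟨h21, h22, _⟩ := mem_cnt.1 hn₂
      have hdvd : q ∣ p * (n₁ - n₂) := ⟨⌊(n₁:ℝ)*α⌋ - ⌊(n₂:ℝ)*α⌋, by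
        rw [hf] at heq; simp only at heq; linear_combination -heq⟩
      have hdvd2 : q ∣ n₁ - n₂ := (IsCoprime.dvd_of_dvd_mul_left (hcop.symm) hdvd)
      have habs : |n₁ - n₂| < q := by rw [abs_lt]; omega
      have := Int.eq_zero_of_abs_lt_dvd hdvd2 habs
      omega
    have hcard : T.card ≤ (Finset.Ioc ⌊-((q:ℝ)*β) + c0⌋ ⌊c1⌋).card :=
      Finset.card_le_card_of_injOn f hmaps hinj
    have hf1 : (⌊c1⌋ : ℝ) ≤ c1 := Int.floor_le _
    have hf2 : (⌊-((q:ℝ)*β) + c0⌋ : ℝ) > -((q:ℝ)*β) + c0 - 1 := by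
      linarith [Int.lt_floor_add_one (-((q:ℝ)*β) + c0)]
    have hIoc : ((Finset.Ioc ⌊-((q:ℝ)*β) + c0⌋ ⌊c1⌋).card : ℝ) ≤ (q:ℝ)*β + 2 := by
      rw [Int.card_Ioc]
      rcases le_or_gt (⌊c1⌋ - ⌊-((q:ℝ)*β) + c0⌋) 0 with h | h
      · rw [Int.toNat_of_nonpos h]; norm_num; nlinarith
      · have : (((⌊c1⌋ - ⌊-((q:ℝ)*β) + c0⌋).toNat : ℤ) : ℝ) = ((⌊c1⌋ - ⌊-((q:ℝ)*β) + c0⌋ : ℤ):ℝ) := by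
          rw [Int.toNat_of_nonneg (le_of_lt h)]
        have h2 : (((⌊c1⌋ - ⌊-((q:ℝ)*β) + c0⌋).toNat : ℕ) : ℝ) = ((⌊c1⌋ - ⌊-((q:ℝ)*β) + c0⌋ : ℤ):ℝ) := by
          exact_mod_cast this
        rw [h2]
        push_cast
        linarith
    calc (T.card : ℝ) ≤ _ := by exact_mod_cast hcard
      _ ≤ _ := hIoc


theorem cnt_add (α β : ℝ) (a b c : ℤ) (h1 : a ≤ b) (h2 : b ≤ c) :
    cnt α β a c = cnt α β a b + cnt α β b c := by
  unfold cnt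
  have hdisj : Disjoint (Finset.Ioc a b) (Finset.Ioc b c) := by
    rw [Finset.disjoint_left]
    intro x hx hx'
    rw [Finset.mem_Ioc] at hx hx'
    omega
  rw [← Finset.card_union_of_disjoint (Finset.disjoint_filter_filter hdisj),
    ← Finset.filter_union, Finset.Ioc_union_Ioc_eq_Ioc h1 h2]

theorem cnt_le (α β : ℝ) (a b : ℤ) (h : a ≤ b) : (cnt α β a b : ℤ) ≤ b - a := by
  unfold cnt
  calc ((Finset.filter _ _).card : ℤ) ≤ ((Finset.Ioc a b).card : ℤ) := by
        exact_mod_cast Finset.card_filter_le _ _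
    _ = b - a := by rw [Int.card_Ioc, Int.toNat_of_nonneg (by omega)]

theorem blocks_est (α β : ℝ) (hβ0 : 0 ≤ β) (hβ1 : β ≤ 1) (p q : ℤ) (hq : 0 < q)
    (hcop : IsCoprime p q) (hθ : |(q:ℝ)*α - p| ≤ 1/q) :
    ∀ B : ℕ, |(cnt α β 0 (B*q) : ℝ) - ((B:ℝ)*q)*β| ≤ 2*B := by
  intro B
  induction B with
  | zero => simp [cnt]
  | succ B ih =>
    have hstep := block_count α β hβ0 hβ1 p q hq hcop hθ ((B:ℤ)*q)
    have hsplit : cnt α β 0 ((B+1:ℕ)*q) = cnt α β 0 ((B:ℤ)*q) + cnt α β ((B:ℤ)*q) ((B:ℤ)*q + q) := by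
      have he : ((B+1:ℕ):ℤ)*q = (B:ℤ)*q + q := by push_cast; ring
      rw [he]
      exact cnt_add α β 0 ((B:ℤ)*q) ((B:ℤ)*q + q) (by positivity) (by omega)
    rw [hsplit]
    have habs := abs_le.1 ih
    have habs2 := abs_le.1 (abs_le.2 ⟨by linarith [hstep.1], by linarith [hstep.2]⟩ :
      |(cnt α β ((B:ℤ)*q) ((B:ℤ)*q + q) : ℝ) - (q:ℝ)*β| ≤ 2)
    rw [abs_le]
    push_cast
    push_cast at habs habs2
    constructor <;> [linarith [habs.1, habs2.1]; linarith [habs.2, habs2.2]]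

theorem count_est (α β : ℝ) (hβ0 : 0 ≤ β) (hβ1 : β ≤ 1) (p q : ℤ) (hq : 0 < q)
    (hcop : IsCoprime p q) (hθ : |(q:ℝ)*α - p| ≤ 1/q) (M : ℤ) (hM : 0 ≤ M) :
    |(cnt α β 0 M : ℝ) - (M:ℝ)*β| ≤ 2*((M:ℝ)/(q:ℝ)) + 2*q := by
  have hqR : (0:ℝ) < q := by exact_mod_cast hq
  set B : ℤ := M / q with hB
  have hB0 : 0 ≤ B := Int.ediv_nonneg hM (by omega)
  have hmod := Int.mul_ediv_add_emod M q
  have hr0 := Int.emod_nonneg M (by omega : q ≠ 0)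
  have hrq := Int.emod_lt_of_pos M hq
  have hBq : B * q ≤ M := by rw [hB, mul_comm]; linarith
  have hMBq : M - B * q < q := by rw [hB, mul_comm]; linarith
  have hsplit : cnt α β 0 M = cnt α β 0 (B*q) + cnt α β (B*q) M :=
    cnt_add α β 0 (B*q) M (mul_nonneg hB0 (by omega)) hBq
  have hblk := blocks_est α β hβ0 hβ1 p q hq hcop hθ B.toNat
  have hBt : ((B.toNat : ℕ) : ℤ) = B := Int.toNat_of_nonneg hB0
  have hBt' : ((B.toNat : ℕ) : ℤ) * q = B * q := by rw [hBt]
  have hblk' : |(cnt α β 0 (B*q) : ℝ) - ((B:ℝ)*q)*β| ≤ 2*(B:ℝ) := by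
    have h1 : ((B.toNat:ℕ):ℤ)*q = B*q := hBt'
    have h2 : ((B.toNat:ℕ):ℝ) = (B:ℝ) := by exact_mod_cast hBt
    rw [show ((B.toNat:ℕ):ℤ)*q = B*q from hBt'] at hblk
    rw [h2] at hblk
    exact hblk
  have hc2 : (cnt α β (B*q) M : ℤ) ≤ M - B*q := cnt_le α β (B*q) M hBq
  have hc2R : (cnt α β (B*q) M : ℝ) ≤ (q:ℝ) := by
    have h1 : (cnt α β (B*q) M : ℤ) ≤ q := by omega
    exact_mod_cast h1
  have hBR : (B:ℝ) ≤ (M:ℝ)/(q:ℝ) := by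
    rw [le_div_iff₀ hqR]
    exact_mod_cast hBq
  have hMq : ((M:ℝ) - (B:ℝ)*q)*β ≤ (q:ℝ) := by
    have h1 : (M:ℝ) - (B:ℝ)*q ≤ q := by
      have : ((M - B*q : ℤ):ℝ) ≤ ((q:ℤ):ℝ) := by exact_mod_cast le_of_lt hMBq
      push_cast at this
      linarith
    have h2 : 0 ≤ (M:ℝ) - (B:ℝ)*q := by
      have : (0:ℝ) ≤ ((M - B*q : ℤ):ℝ) := by exact_mod_cast (by omega : (0:ℤ) ≤ M - B*q)
      push_cast at this
      linarith
    nlinarith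
  have hMq0 : 0 ≤ ((M:ℝ) - (B:ℝ)*q)*β := by
    have h2 : 0 ≤ (M:ℝ) - (B:ℝ)*q := by
      have : (0:ℝ) ≤ ((M - B*q : ℤ):ℝ) := by exact_mod_cast (by omega : (0:ℤ) ≤ M - B*q)
      push_cast at this
      linarith
    positivity
  rw [hsplit]
  have habs := abs_le.1 hblk'
  rw [abs_le]
  push_cast
  constructor
  · have : (0:ℝ) ≤ (cnt α β (B*q) M : ℝ) := Nat.cast_nonneg _
    nlinarith [habs.1]
  · nlinarith [habs.2]


theorem exists_good (α : ℝ) (hirr : Irrational α) (Q : ℤ) :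
    ∃ p q : ℤ, Q ≤ q ∧ 0 < q ∧ IsCoprime p q ∧ |(q:ℝ)*α - p| ≤ 1/q := by
  have hS := Real.infinite_rat_abs_sub_lt_one_div_den_sq_of_irrational hirr
  set D : ℤ := max Q 1 with hD
  set K : ℤ := D * (⌈|α|⌉ + 1) with hK
  -- the set of candidates with small denominator is finite
  have hfin : Set.Finite {r : ℚ | |α - r| < 1/(r.den:ℝ)^2 ∧ (r.den : ℤ) ≤ D} := by
    apply Set.Finite.of_finite_image (f := fun r : ℚ => (r.num, (r.den:ℤ)))
    · apply Set.Finite.subset (Set.finite_Icc ((-K, (1:ℤ))) ((K, D)))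
      rintro ⟨x, y⟩ ⟨r, hr, heq⟩
      simp only [Prod.mk.injEq] at heq
      obtain ⟨hex, hey⟩ := heq
      subst hex
      subst hey
      obtain ⟨hr1, hr2⟩ := hr
      have hden1 : (1:ℝ) ≤ (r.den:ℝ) := by exact_mod_cast r.pos
      have hd2 : (1:ℝ)/(r.den:ℝ)^2 ≤ 1 := by
        rw [div_le_one (by positivity)]
        nlinarith
      have hrabs : |(r:ℝ)| ≤ |α| + 1 := by
        have := abs_sub_abs_le_abs_sub (r:ℝ) α
        rw [abs_sub_comm] at this
        linarith [hr1.le, hd2, abs_nonneg (α - (r:ℝ))]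
      have hnum : |(r.num:ℝ)| ≤ (K:ℝ) := by
        have hcast : (r:ℝ) = (r.num:ℝ)/(r.den:ℝ) := by
          rw [Rat.cast_def]
        have h1 : |(r.num:ℝ)| = |(r:ℝ)| * (r.den:ℝ) := by
          rw [hcast, abs_div, abs_of_pos (by positivity : (0:ℝ) < (r.den:ℝ))]
          field_simp
        have hdD : (r.den : ℝ) ≤ (D:ℝ) := by exact_mod_cast hr2
        have hDpos : (0:ℝ) < D := by
          have : (1:ℤ) ≤ D := le_max_right _ _
          exact_mod_cast lt_of_lt_of_le zero_lt_one this
        have hceil : |α| + 1 ≤ ((⌈|α|⌉ + 1 : ℤ):ℝ) := by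
          push_cast
          linarith [Int.le_ceil |α|]
        have : |(r.num:ℝ)| ≤ (|α|+1) * (D:ℝ) := by
          rw [h1]
          apply mul_le_mul hrabs hdD (by positivity) (by positivity)
        rw [hK]
        push_cast
        push_cast at hceil
        nlinarith [abs_nonneg α]
      rw [Set.mem_Icc]
      have hnum' : -K ≤ r.num ∧ r.num ≤ K := by
        have h := abs_le.1 hnum
        exact ⟨by exact_mod_cast h.1, by exact_mod_cast h.2⟩
      refine ⟨⟨hnum'.1, ?_⟩, ⟨hnum'.2, hr2⟩⟩
      show (1:ℤ) ≤ (r.den:ℤ)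
      exact_mod_cast r.pos
    · intro r₁ h₁ r₂ h₂ heq
      simp only [Prod.mk.injEq] at heq
      have hd : r₁.den = r₂.den := by exact_mod_cast heq.2
      exact Rat.ext heq.1 hd
  have hinf : Set.Infinite ({r : ℚ | |α - r| < 1/(r.den:ℝ)^2} \ {r : ℚ | |α - r| < 1/(r.den:ℝ)^2 ∧ (r.den : ℤ) ≤ D}) := Set.Infinite.diff hS hfin
  obtain ⟨r, hr⟩ := hinf.nonempty
  obtain ⟨hr1, hr2⟩ := hr
  simp only [Set.mem_setOf_eq] at hr1 hr2
  push_neg at hr2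
  have hden : D < (r.den : ℤ) := hr2 hr1
  refine ⟨r.num, r.den, by omega, by positivity, ?_, ?_⟩
  · rw [Int.isCoprime_iff_gcd_eq_one]
    exact r.reduced
  · have hdenR : (0:ℝ) < (r.den:ℝ) := by positivity
    have hcast : (r:ℝ) = (r.num:ℝ)/(r.den:ℝ) := by rw [Rat.cast_def]
    have h2 : |α - (r.num:ℝ)/(r.den:ℝ)| < 1/(r.den:ℝ)^2 := by rw [← hcast]; exact hr1
    have h3 : |(r.den:ℝ)*α - (r.num:ℝ)| = (r.den:ℝ) * |α - (r.num:ℝ)/(r.den:ℝ)| := by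
      have he : (r.den:ℝ)*α - (r.num:ℝ) = (r.den:ℝ) * (α - (r.num:ℝ)/(r.den:ℝ)) := by
        field_simp
      rw [he, abs_mul, abs_of_pos hdenR]
    push_cast
    rw [h3]
    calc (r.den:ℝ) * |α - (r.num:ℝ)/(r.den:ℝ)| ≤ (r.den:ℝ) * (1/(r.den:ℝ)^2) := by
          apply mul_le_mul_of_nonneg_left h2.le hdenR.le
      _ = 1/(r.den:ℝ) := by field_simp


theorem cnt_tendsto (α β : ℝ) (hβ0 : 0 ≤ β) (hβ1 : β ≤ 1) (hirr : Irrational α) :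
    Filter.Tendsto (fun N : ℕ => (cnt α β 0 (N:ℤ) : ℝ)/(N:ℝ)) Filter.atTop (nhds β) := by
  rw [Metric.tendsto_atTop]
  intro δ hδ
  obtain ⟨p, q, hQ, hq, hcop, hθ⟩ := exists_good α hirr (⌈8/δ⌉ + 1)
  have hqR : (0:ℝ) < q := by exact_mod_cast hq
  have hq8 : 8/δ < (q:ℝ) := by
    have h1 : ((⌈8/δ⌉ + 1 : ℤ):ℝ) ≤ (q:ℝ) := by exact_mod_cast hQ
    push_cast at h1
    linarith [Int.le_ceil (8/δ)]
  have h2q : 2/(q:ℝ) ≤ δ/4 := by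
    rw [div_le_iff₀ hqR]
    have hqδ : (q:ℝ)*δ > 8 := by
      have := (div_lt_iff₀ hδ).1 hq8
      linarith
    nlinarith
  refine ⟨(⌈4*(q:ℝ)/δ⌉).toNat + 1, fun N hN => ?_⟩
  have hNpos : 0 < N := by omega
  have hNR : (0:ℝ) < (N:ℝ) := by exact_mod_cast hNpos
  have hN4 : 4*(q:ℝ)/δ ≤ (N:ℝ) := by
    have h1 : ((⌈4*(q:ℝ)/δ⌉.toNat + 1 : ℕ):ℝ) ≤ (N:ℝ) := by exact_mod_cast hN
    have h2 : (⌈4*(q:ℝ)/δ⌉ : ℝ) ≤ ((⌈4*(q:ℝ)/δ⌉.toNat : ℤ) : ℝ) := by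
      exact_mod_cast Int.self_le_toNat _
    have h3 := Int.le_ceil (4*(q:ℝ)/δ)
    push_cast at h1 h2
    linarith
  have h2qN : 2*(q:ℝ)/(N:ℝ) ≤ δ/2 := by
    rw [div_le_iff₀ hNR]
    have : δ*(N:ℝ) ≥ 4*q := by
      have := (div_le_iff₀ hδ).1 hN4
      linarith
    linarith
  have hest := count_est α β hβ0 hβ1 p q hq hcop hθ (N:ℤ) (by exact_mod_cast Nat.zero_le N)
  have hcast : (((N:ℤ)):ℝ) = (N:ℝ) := by push_cast; ring
  rw [hcast] at hest
  have e1 : (cnt α β 0 (N:ℤ) : ℝ)/(N:ℝ) - β = ((cnt α β 0 (N:ℤ) : ℝ) - (N:ℝ)*β)/(N:ℝ) := by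
    field_simp
  rw [Real.dist_eq, e1, abs_div, abs_of_pos hNR]
  have h5 : |(cnt α β 0 (N:ℤ) : ℝ) - (N:ℝ)*β| / (N:ℝ) ≤ (2*((N:ℝ)/(q:ℝ)) + 2*q)/(N:ℝ) :=
    div_le_div_of_nonneg_right hest hNR.le |>.trans_eq rfl
  have h6 : (2*((N:ℝ)/(q:ℝ)) + 2*q)/(N:ℝ) = 2/(q:ℝ) + 2*(q:ℝ)/(N:ℝ) := by
    field_simp
  rw [h6] at h5
  calc |(cnt α β 0 (N:ℤ) : ℝ) - (N:ℝ)*β| / (N:ℝ) ≤ 2/(q:ℝ) + 2*(q:ℝ)/(N:ℝ) := h5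
    _ ≤ δ/4 + δ/2 := by linarith
    _ < δ := by linarith



theorem fract_inj (α : ℝ) (hirr : Irrational α) {n m : ℤ}
    (h : Int.fract ((n:ℝ)*α) = Int.fract ((m:ℝ)*α)) : n = m := by
  by_contra hne
  have h2 : (n:ℝ)*α - ⌊(n:ℝ)*α⌋ = (m:ℝ)*α - ⌊(m:ℝ)*α⌋ := h
  have h3 : ((n - m : ℤ):ℝ) * α = ((⌊(n:ℝ)*α⌋ - ⌊(m:ℝ)*α⌋ : ℤ):ℝ) := by
    push_cast
    linarith
  have hnm : (n - m : ℤ) ≠ 0 := by omega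
  exact (hirr.intCast_mul hnm).ne_int (⌊(n:ℝ)*α⌋ - ⌊(m:ℝ)*α⌋) (by exact_mod_cast h3)

theorem fract_ne_zero (α : ℝ) (hirr : Irrational α) {n : ℤ} (hn : n ≠ 0) :
    Int.fract ((n:ℝ)*α) ≠ 0 := by
  intro h
  have h0 : Int.fract ((0:ℤ):ℝ) * α = 0 := by norm_num
  have : Int.fract (((0:ℤ):ℝ) * α) = 0 := by norm_num
  exact hn (fract_inj α hirr (h.trans this.symm))

theorem main_tendsto (α : ℝ) (hirr : Irrational α) (ε : ℝ) (h0 : 0 < ε) (h1 : ε < 1/4) :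
    Tendsto (fun N : ℕ => ((((Finset.Icc (-(N:ℤ)) (N:ℤ)).filter
      (fun n : ℤ => Int.fract ((n:ℝ)*α) < 2*ε ∨ 1 - 2*ε < Int.fract ((n:ℝ)*α))).card : ℝ))
      / (2*(N:ℝ)+1)) atTop (nhds (4*ε)) := by
  -- symmetric window count = 2 * positive count + 1
  have hsym : ∀ N : ℕ, ((Finset.Icc (-(N:ℤ)) (N:ℤ)).filter (fun n : ℤ => Int.fract ((n:ℝ)*α) < 2*ε ∨ 1 - 2*ε < Int.fract ((n:ℝ)*α))).card
      = 2 * ((Finset.Ioc (0:ℤ) (N:ℤ)).filter (fun n : ℤ => Int.fract ((n:ℝ)*α) < 2*ε ∨ 1 - 2*ε < Int.fract ((n:ℝ)*α))).card + 1 := by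
    intro N
    have hsplit : Finset.Icc (-(N:ℤ)) (N:ℤ)
        = (Finset.Icc (-(N:ℤ)) (-1:ℤ) ∪ {(0:ℤ)}) ∪ Finset.Ioc (0:ℤ) (N:ℤ) := by
      ext x
      simp only [Finset.mem_Icc, Finset.mem_union, Finset.mem_Ioc, Finset.mem_singleton]
      omega
    have hd1 : Disjoint (Finset.Icc (-(N:ℤ)) (-1:ℤ) ∪ {(0:ℤ)}) (Finset.Ioc (0:ℤ) (N:ℤ)) := by
      rw [Finset.disjoint_left]
      intro x hx hx'
      simp only [Finset.mem_Icc, Finset.mem_union, Finset.mem_singleton] at hx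
      simp only [Finset.mem_Ioc] at hx'
      omega
    have hd2 : Disjoint (Finset.Icc (-(N:ℤ)) (-1:ℤ)) ({(0:ℤ)} : Finset ℤ) := by
      rw [Finset.disjoint_left]
      intro x hx hx'
      simp only [Finset.mem_Icc] at hx
      simp only [Finset.mem_singleton] at hx'
      omega
    rw [hsplit, Finset.filter_union, Finset.card_union_of_disjoint
      (Finset.disjoint_filter_filter hd1), Finset.filter_union,
      Finset.card_union_of_disjoint (Finset.disjoint_filter_filter hd2)]
    have h0mem : ({(0:ℤ)} : Finset ℤ).filter (fun n : ℤ => Int.fract ((n:ℝ)*α) < 2*ε ∨ 1 - 2*ε < Int.fract ((n:ℝ)*α)) = {(0:ℤ)} := by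
      rw [Finset.filter_eq_self]
      intro x hx
      rw [Finset.mem_singleton] at hx
      subst hx
      left
      simp only [Int.cast_zero, zero_mul, Int.fract_zero]
      linarith
    have hneg : ((Finset.Icc (-(N:ℤ)) (-1:ℤ)).filter (fun n : ℤ => Int.fract ((n:ℝ)*α) < 2*ε ∨ 1 - 2*ε < Int.fract ((n:ℝ)*α))).card
        = ((Finset.Ioc (0:ℤ) (N:ℤ)).filter (fun n : ℤ => Int.fract ((n:ℝ)*α) < 2*ε ∨ 1 - 2*ε < Int.fract ((n:ℝ)*α))).card := by
      apply Finset.card_bij (fun n _ => -n)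
      · intro n hn
        rw [Finset.mem_filter, Finset.mem_Icc] at hn
        rw [Finset.mem_filter, Finset.mem_Ioc]
        have hne : n ≠ 0 := by omega
        have hfr := fract_ne_zero α hirr hne
        have hcast : ((-n : ℤ):ℝ) * α = -((n:ℝ)*α) := by push_cast; ring
        have hfneg : Int.fract (((-n : ℤ):ℝ)*α) = 1 - Int.fract ((n:ℝ)*α) := by
          rw [hcast, Int.fract_neg hfr]
        refine ⟨⟨by omega, by omega⟩, ?_⟩
        rcases hn.2 with h | h
        · right; rw [hfneg]; linarith
        · left; rw [hfneg]; linarith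
      · intro n₁ h₁ n₂ h₂ he
        omega
      · intro n hn
        rw [Finset.mem_filter, Finset.mem_Ioc] at hn
        refine ⟨-n, ?_, by ring⟩
        rw [Finset.mem_filter, Finset.mem_Icc]
        have hne : n ≠ 0 := by omega
        have hfr := fract_ne_zero α hirr hne
        have hcast : ((-n : ℤ):ℝ) * α = -((n:ℝ)*α) := by push_cast; ring
        have hfneg : Int.fract (((-n : ℤ):ℝ)*α) = 1 - Int.fract ((n:ℝ)*α) := by
          rw [hcast, Int.fract_neg hfr]
        refine ⟨⟨by omega, by omega⟩, ?_⟩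
        rcases hn.2 with h | h
        · right; rw [hfneg]; linarith
        · left; rw [hfneg]; linarith
    rw [h0mem, hneg, Finset.card_singleton]
    ring
  -- positive-side count bounds
  set Dn : ℕ → ℕ := fun N => ((Finset.Ioc (0:ℤ) (N:ℤ)).filter (fun n : ℤ => Int.fract ((n:ℝ)*α) < 2*ε ∨ 1 - 2*ε < Int.fract ((n:ℝ)*α))).card with hDn
  have hDbounds : ∀ N : ℕ,
      (cnt α (2*ε) 0 (N:ℤ) : ℝ) + N - cnt α (1-2*ε) 0 (N:ℤ) - 1 ≤ (Dn N : ℝ) ∧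
      (Dn N : ℝ) ≤ (cnt α (2*ε) 0 (N:ℤ) : ℝ) + N - cnt α (1-2*ε) 0 (N:ℤ) := by
    intro N
    classical
    set s := Finset.Ioc (0:ℤ) (N:ℤ) with hs
    have hsplit : Dn N = (s.filter (fun n : ℤ => Int.fract ((n:ℝ)*α) < 2*ε)).card
        + (s.filter (fun n : ℤ => 1 - 2*ε < Int.fract ((n:ℝ)*α))).card := by
      rw [hDn]
      simp only
      rw [Finset.filter_or, Finset.card_union_of_disjoint]
      rw [Finset.disjoint_left]
      intro x hx hx'
      rw [Finset.mem_filter] at hx hx'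
      linarith [hx.2, hx'.2]
    have hC1 : (s.filter (fun n : ℤ => Int.fract ((n:ℝ)*α) < 2*ε)).card = cnt α (2*ε) 0 (N:ℤ) := rfl
    have hcompl : cnt α (1-2*ε) 0 (N:ℤ)
        + (s.filter (fun n : ℤ => ¬ Int.fract ((n:ℝ)*α) < 1-2*ε)).card = s.card := by
      exact Finset.card_filter_add_card_filter_not _
    have hscard : s.card = N := by
      rw [hs, Int.card_Ioc]
      simp
    set E := (s.filter (fun n : ℤ => 1 - 2*ε < Int.fract ((n:ℝ)*α))).card with hE
    set F := (s.filter (fun n : ℤ => ¬ Int.fract ((n:ℝ)*α) < 1-2*ε)).card with hF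
    have hEF : E ≤ F := by
      apply Finset.card_le_card
      intro x hx
      rw [Finset.mem_filter] at hx ⊢
      exact ⟨hx.1, by linarith [hx.2]⟩
    have hFE : F ≤ E + 1 := by
      have hsub : s.filter (fun n : ℤ => ¬ Int.fract ((n:ℝ)*α) < 1-2*ε)
          ⊆ (s.filter (fun n : ℤ => 1 - 2*ε < Int.fract ((n:ℝ)*α)))
            ∪ (s.filter (fun n : ℤ => Int.fract ((n:ℝ)*α) = 1-2*ε)) := by
        intro x hx
        rw [Finset.mem_filter] at hx
        rw [Finset.mem_union, Finset.mem_filter, Finset.mem_filter]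
        rcases lt_or_eq_of_le (not_lt.1 hx.2) with h | h
        · left; exact ⟨hx.1, h⟩
        · right; exact ⟨hx.1, h.symm⟩
      have hone : (s.filter (fun n : ℤ => Int.fract ((n:ℝ)*α) = 1-2*ε)).card ≤ 1 := by
        rw [Finset.card_le_one]
        intro x hx y hy
        rw [Finset.mem_filter] at hx hy
        exact fract_inj α hirr (hx.2.trans hy.2.symm)
      calc F ≤ _ := Finset.card_le_card hsub
        _ ≤ E + (s.filter (fun n : ℤ => Int.fract ((n:ℝ)*α) = 1-2*ε)).card :=
            Finset.card_union_le _ _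
        _ ≤ E + 1 := by omega
    have hFN : cnt α (1-2*ε) 0 (N:ℤ) + F = N := by rw [hF, hcompl, hscard]
    constructor
    · have : Dn N = cnt α (2*ε) 0 (N:ℤ) + E := by rw [hsplit, hC1]
      have hDF : Dn N + 1 ≥ cnt α (2*ε) 0 (N:ℤ) + F := by omega
      have : (Dn N : ℝ) + 1 ≥ (cnt α (2*ε) 0 (N:ℤ) : ℝ) + F := by exact_mod_cast hDF
      have hFR : (F:ℝ) = (N:ℝ) - cnt α (1-2*ε) 0 (N:ℤ) := by
        have : ((cnt α (1-2*ε) 0 (N:ℤ) + F : ℕ) : ℝ) = (N:ℝ) := by exact_mod_cast congrArg (Nat.cast : ℕ → ℝ) hFN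
        push_cast at this
        linarith
      linarith
    · have hle : Dn N ≤ cnt α (2*ε) 0 (N:ℤ) + F := by omega
      have hle' : (Dn N : ℝ) ≤ (cnt α (2*ε) 0 (N:ℤ) : ℝ) + F := by exact_mod_cast hle
      have hFR : (F:ℝ) = (N:ℝ) - cnt α (1-2*ε) 0 (N:ℤ) := by
        have : ((cnt α (1-2*ε) 0 (N:ℤ) + F : ℕ) : ℝ) = (N:ℝ) := by exact_mod_cast congrArg (Nat.cast : ℕ → ℝ) hFN
        push_cast at this
        linarith
      linarith
  -- limit of Dn N / N
  have ht1 := cnt_tendsto α (2*ε) (by linarith) (by linarith) hirr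
  have ht2 := cnt_tendsto α (1-2*ε) (by linarith) (by linarith) hirr
  have ht3 : Tendsto (fun N : ℕ => 1/(N:ℝ)) atTop (nhds 0) := tendsto_one_div_atTop_nhds_zero_nat
  have hDlim : Tendsto (fun N : ℕ => (Dn N : ℝ)/(N:ℝ)) atTop (nhds (4*ε)) := by
    have hlow : Tendsto (fun N : ℕ => (cnt α (2*ε) 0 (N:ℤ) : ℝ)/(N:ℝ) + 1
        - (cnt α (1-2*ε) 0 (N:ℤ) : ℝ)/(N:ℝ) - 1/(N:ℝ)) atTop (nhds (4*ε)) := by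
      have := ((ht1.add (tendsto_const_nhds : Tendsto (fun _ : ℕ => (1:ℝ)) Filter.atTop (nhds 1))).sub ht2).sub ht3
      have he : 2*ε + 1 - (1-2*ε) - 0 = 4*ε := by ring
      rwa [he] at this
    have hhigh : Tendsto (fun N : ℕ => (cnt α (2*ε) 0 (N:ℤ) : ℝ)/(N:ℝ) + 1
        - (cnt α (1-2*ε) 0 (N:ℤ) : ℝ)/(N:ℝ)) atTop (nhds (4*ε)) := by
      have := (ht1.add (tendsto_const_nhds : Tendsto (fun _ : ℕ => (1:ℝ)) Filter.atTop (nhds 1))).sub ht2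
      have he : 2*ε + 1 - (1-2*ε) = 4*ε := by ring
      rwa [he] at this
    apply tendsto_of_tendsto_of_tendsto_of_le_of_le' hlow hhigh
    · filter_upwards [Filter.eventually_ge_atTop 1] with N hN
      have hNR : (0:ℝ) < (N:ℝ) := by exact_mod_cast hN
      have hb := (hDbounds N).1
      have hdiv := div_le_div_of_nonneg_right hb hNR.le
      have he : ((cnt α (2*ε) 0 (N:ℤ) : ℝ) + N - cnt α (1-2*ε) 0 (N:ℤ) - 1)/(N:ℝ)
          = (cnt α (2*ε) 0 (N:ℤ) : ℝ)/(N:ℝ) + 1 - (cnt α (1-2*ε) 0 (N:ℤ) : ℝ)/(N:ℝ) - 1/(N:ℝ) := by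
        field_simp
      rw [he] at hdiv
      exact hdiv
    · filter_upwards [Filter.eventually_ge_atTop 1] with N hN
      have hNR : (0:ℝ) < (N:ℝ) := by exact_mod_cast hN
      have hb := (hDbounds N).2
      have hdiv := div_le_div_of_nonneg_right hb hNR.le
      have he : ((cnt α (2*ε) 0 (N:ℤ) : ℝ) + N - cnt α (1-2*ε) 0 (N:ℤ))/(N:ℝ)
          = (cnt α (2*ε) 0 (N:ℤ) : ℝ)/(N:ℝ) + 1 - (cnt α (1-2*ε) 0 (N:ℤ) : ℝ)/(N:ℝ) := by
        field_simp
      rw [he] at hdiv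
      exact hdiv
  -- final algebra
  have hnum : Tendsto (fun N : ℕ => 2*((Dn N:ℝ)/(N:ℝ)) + 1/(N:ℝ)) atTop (nhds (2*(4*ε) + 0)) :=
    (hDlim.const_mul 2).add ht3
  have hden : Tendsto (fun N : ℕ => (2:ℝ) + 1/(N:ℝ)) atTop (nhds (2 + 0)) :=
    (tendsto_const_nhds : Tendsto (fun _ : ℕ => (2:ℝ)) atTop (nhds 2)).add ht3
  have hquot : Tendsto (fun N : ℕ => (2*((Dn N:ℝ)/(N:ℝ)) + 1/(N:ℝ))/(2 + 1/(N:ℝ)))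
      atTop (nhds ((2*(4*ε) + 0)/(2 + 0))) := hnum.div hden (by norm_num)
  have hval : (2*(4*ε) + 0)/(2 + 0) = 4*ε := by ring
  rw [hval] at hquot
  apply Tendsto.congr' _ hquot
  filter_upwards [Filter.eventually_ge_atTop 1] with N hN
  have hNR : (0:ℝ) < (N:ℝ) := by exact_mod_cast hN
  have hcard : (((Finset.Icc (-(N:ℤ)) (N:ℤ)).filter
      (fun n : ℤ => Int.fract ((n:ℝ)*α) < 2*ε ∨ 1 - 2*ε < Int.fract ((n:ℝ)*α))).card : ℝ)
      = 2*(Dn N:ℝ) + 1 := by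
    rw [hsym N]
    push_cast
    ring
  rw [hcard]
  rw [div_eq_div_iff (by positivity) (by positivity)]
  field_simp

end helpers

/-- For `0 < ε < 1/4` and `A = {n ∈ ℤ : {n√2} < ε}`, the set `(A-A)+(A-A)` has
density `4ε < 1`; in particular it is a proper subset of `ℤ`. -/
theorem stmt11 (ε : ℝ) (h0 : 0 < ε) (h1 : ε < 1 / 4)
    (A B : Set ℤ)
    (hA : A = {n : ℤ | Int.fract ((n : ℝ) * Real.sqrt 2) < ε})
    (hB : B = {n : ℤ | ∃ a ∈ A, ∃ b ∈ A, ∃ c ∈ A, ∃ d ∈ A, n = a - b + c - d}) :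
    Filter.Tendsto
      (fun n : ℕ => (((B ∩ {x : ℤ | |x| ≤ (n : ℤ)}).ncard : ℝ)) / (2 * (n : ℝ) + 1))
      Filter.atTop (nhds (4 * ε)) ∧
    4 * ε < 1 ∧ B ≠ Set.univ := by
  have hirr : Irrational (Real.sqrt 2) := irrational_sqrt_two
  have h14 : ε < 1/4 := h1
  have hBS := B_char (Real.sqrt 2) hirr ε h0 h14 A B hA hB
  refine ⟨?_, by linarith, ?_⟩
  · have hmt := main_tendsto (Real.sqrt 2) hirr ε h0 h14
    apply Tendsto.congr _ hmt
    intro N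
    congr 1
    have hset : B ∩ {x : ℤ | |x| ≤ (N:ℤ)}
        = ↑((Finset.Icc (-(N:ℤ)) (N:ℤ)).filter
          (fun n : ℤ => Int.fract ((n:ℝ) * Real.sqrt 2) < 2*ε ∨
            1 - 2*ε < Int.fract ((n:ℝ) * Real.sqrt 2))) := by
      ext x
      rw [hBS]
      simp only [Set.mem_inter_iff, Set.mem_setOf_eq, Finset.coe_filter, Finset.mem_Icc, abs_le]
      tauto
    rw [hset, Set.ncard_coe_finset]
  · intro hBuniv
    obtain ⟨a, ha1, ha2⟩ := frac_dense (Real.sqrt 2) hirr (2*ε) (1-2*ε)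
      (by linarith) (by linarith) (by linarith)
    have haB : a ∈ B := hBuniv ▸ Set.mem_univ a
    rw [hBS] at haB
    rcases haB with h | h <;> linarith
end

section
/- There exists a leafless subtree $T \subseteq T_2^o$ of the rooted binary tree containing the root, of positive Hausdorff dimension, and a subset $X \subseteq V(T)$ with positive lower density $d_*(X) = \liminf_{N\to\infty}\frac{1}{N}\sum_{n=1}^N |X \cap S_n(T)|/|S_n(T)| > 0$, such that for every $k \geq 1$ and $K \geq 1$ there exists $t \geq K$ with no pair $x, y \in X$ satisfying $d(x,y) = kt$. -/
open Filter

/-- Length of the longest common prefix of two binary strings. -/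
def lcpLen (x y : List Bool) : ℕ :=
  ((x.zip y).takeWhile fun p => p.1 == p.2).length

/-- Graph distance between two vertices of the rooted binary tree `T₂ᵒ`, whose vertices
are finite binary strings (children of `l` are `l ++ [b]`). -/
def btDist (x y : List Bool) : ℕ :=
  (x.length - lcpLen x y) + (y.length - lcpLen x y)

/-- The sphere of radius `n` about the root in a subtree `T` of the binary tree. -/
def btSphere (T : Set (List Bool)) (n : ℕ) : Set (List Bool) :=
  {l ∈ T | l.length = n}

/-- Lower density of `X` in the subtree `T`. -/
noncomputable def btLowerDensity (T X : Set (List Bool)) : ℝ :=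
  Filter.liminf
    (fun N : ℕ =>
      (∑ n ∈ Finset.Icc 1 N,
        ((X ∩ btSphere T n).ncard : ℝ) / ((btSphere T n).ncard : ℝ)) / (N : ℝ))
    Filter.atTop

/-- Growth-rate (Hausdorff) dimension of a leafless subtree `T` of the binary tree:
`liminf_n log₂ |Sₙ(T)| / n`; for such trees this equals the Hausdorff dimension of the
boundary fractal `∂T ⊆ [0,1]`. -/
noncomputable def btDimension (T : Set (List Bool)) : ℝ :=
  Filter.liminf (fun n : ℕ => Real.logb 2 ((btSphere T n).ncard : ℝ) / (n : ℝ))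
    Filter.atTop

namespace S12

/-- The Bohr set `{n : {n√2} < 1/16}`. -/
def A : Set ℕ := {n | Int.fract ((n : ℝ) * Real.sqrt 2) < 1/16}

lemma sqrt2_sq : Real.sqrt 2 ^ 2 = 2 := Real.sq_sqrt (by norm_num)

lemma delta_lb : (1:ℝ)/83 < 29 * Real.sqrt 2 - 41 := by
  nlinarith [sqrt2_sq, Real.sqrt_nonneg 2]

lemma delta_ub : 29 * Real.sqrt 2 - 41 < 1/16 := by
  nlinarith [sqrt2_sq, Real.sqrt_nonneg 2]

lemma arith (x δ : ℝ) (hx0 : 0 ≤ x) (hx1 : x < 1) (hδ1 : 1/83 < δ) (hδ2 : δ < 1/16) :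
    ∃ j : ℕ, 1 ≤ j ∧ j ≤ 83 ∧ 1 ≤ x + j * δ ∧ x + j * δ < 1 + δ := by
  have hδ0 : (0:ℝ) < δ := by linarith
  refine ⟨⌈(1 - x) / δ⌉₊, ?_, ?_, ?_, ?_⟩
  · rw [Nat.one_le_ceil_iff]
    exact div_pos (by linarith) hδ0
  · apply Nat.ceil_le.2
    rw [div_le_iff₀ hδ0]
    push_cast
    linarith
  · have hjd : ((1:ℝ) - x)/δ ≤ (⌈(1 - x) / δ⌉₊ : ℝ) := Nat.le_ceil _
    rw [div_le_iff₀ hδ0] at hjd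
    linarith
  · have hjd2 : ((⌈(1 - x) / δ⌉₊ : ℝ)) < (1 - x)/δ + 1 :=
      Nat.ceil_lt_add_one (div_nonneg (by linarith) hδ0.le)
    have := mul_lt_mul_of_pos_right hjd2 hδ0
    rw [add_mul, div_mul_cancel₀ _ hδ0.ne'] at this
    linarith

/-- The Bohr set is syndetic with gap `2407 = 29 * 83`. -/
lemma synd (m : ℕ) : ∃ a : ℕ, m < a ∧ a ≤ m + 2407 ∧ a ∈ A := by
  obtain ⟨j, hj1, hj83, key1, key2⟩ :=
    arith (Int.fract ((m:ℝ) * Real.sqrt 2)) (29 * Real.sqrt 2 - 41)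
      (Int.fract_nonneg _) (Int.fract_lt_one _) delta_lb delta_ub
  refine ⟨m + 29*j, by omega, by omega, ?_⟩
  have hfl : (⌊(m:ℝ) * Real.sqrt 2⌋ : ℝ) + Int.fract ((m:ℝ) * Real.sqrt 2)
      = (m:ℝ) * Real.sqrt 2 := Int.floor_add_fract _
  have hcast : ((m + 29*j : ℕ) : ℝ) * Real.sqrt 2
      = (Int.fract ((m:ℝ) * Real.sqrt 2) + j*(29 * Real.sqrt 2 - 41))
        + ((⌊(m:ℝ) * Real.sqrt 2⌋ + 41*(j:ℕ) : ℤ) : ℝ) := by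
    push_cast
    linear_combination -hfl
  show Int.fract (((m + 29*j : ℕ) : ℝ) * Real.sqrt 2) < 1/16
  rw [hcast, Int.fract_add_intCast]
  have hfloor : ⌊Int.fract ((m:ℝ) * Real.sqrt 2) + (j:ℝ)*(29 * Real.sqrt 2 - 41)⌋ = 1 := by
    rw [Int.floor_eq_iff]
    constructor
    · exact_mod_cast key1
    · push_cast
      have := delta_ub
      linarith
  rw [Int.fract, hfloor]
  have := delta_ub
  push_cast
  linarith

/-- For irrational `β`, there are arbitrarily large `t` with `‖tβ‖ ≥ 1/8`. -/
lemma avoid (β : ℝ) (hβ : Irrational β) (K : ℕ) :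
    ∃ t : ℕ, K ≤ t ∧ ∀ z : ℤ, 1/8 ≤ |(t:ℝ) * β - z| := by
  by_contra hcon
  push_neg at hcon
  have h : ∀ s : ℕ, ∃ z : ℤ, |((K + s : ℕ):ℝ) * β - z| < 1/8 := fun s =>
    hcon (K+s) (Nat.le_add_right _ _)
  choose f hf using h
  have hdiff : ∀ s : ℕ, |β - ((f (s+1) - f s : ℤ) : ℝ)| < 1/4 := by
    intro s
    have h0 := hf s
    have h1 := hf (s+1)
    have e : β - ((f (s+1) - f s : ℤ) : ℝ)
        = (((K + (s+1) : ℕ):ℝ) * β - f (s+1)) - (((K + s : ℕ):ℝ) * β - f s) := by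
      push_cast; ring
    rw [e]
    calc |_ - _| ≤ |((K + (s+1) : ℕ):ℝ) * β - f (s+1)| + |((K + s : ℕ):ℝ) * β - f s| :=
          abs_sub _ _
      _ < 1/4 := by linarith
  have hstep : ∀ s, f (s+1) - f s = f 1 - f 0 := by
    intro s
    have h1 := hdiff s
    have h2 := hdiff 0
    have key : |((f (s+1) - f s - (f 1 - f 0) : ℤ) : ℝ)| < 1 := by
      have e : ((f (s+1) - f s - (f 1 - f 0) : ℤ) : ℝ)
          = (β - ((f (0+1) - f 0 : ℤ) : ℝ)) - (β - ((f (s+1) - f s : ℤ) : ℝ)) := by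
        push_cast; ring
      rw [e]
      calc |_ - _| ≤ |β - ((f (0+1) - f 0 : ℤ) : ℝ)| + |β - ((f (s+1) - f s : ℤ) : ℝ)| :=
            abs_sub _ _
        _ < 1 := by linarith
    have h3 : |f (s+1) - f s - (f 1 - f 0)| < 1 := by exact_mod_cast key
    have h4 := abs_lt.mp h3
    omega
  have hlin : ∀ s : ℕ, f s = f 0 + s * (f 1 - f 0) := by
    intro s
    induction s with
    | zero => simp
    | succ n ih =>
      have h := hstep n
      have : f (n+1) = f n + (f 1 - f 0) := by omega
      rw [this, ih]
      push_cast
      ring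
  have hne : β - ((f 1 - f 0 : ℤ):ℝ) ≠ 0 := sub_ne_zero.mpr (hβ.ne_int _)
  have hpos : 0 < |β - ((f 1 - f 0 : ℤ):ℝ)| := abs_pos.mpr hne
  obtain ⟨s, hs⟩ := exists_nat_gt ((1/8 + |(K:ℝ)*β - f 0|) / |β - ((f 1 - f 0 : ℤ):ℝ)|)
  have hs' : 1/8 + |(K:ℝ)*β - f 0| < s * |β - ((f 1 - f 0 : ℤ):ℝ)| := by
    rw [div_lt_iff₀ hpos] at hs; linarith
  have hfs := hf s
  rw [hlin s] at hfs
  have e : ((K + s : ℕ):ℝ) * β - ((f 0 + s * (f 1 - f 0) : ℤ) : ℝ)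
      = (s:ℝ) * (β - ((f 1 - f 0 : ℤ):ℝ)) + ((K:ℝ) * β - f 0) := by push_cast; ring
  rw [e] at hfs
  have e2 : (s:ℝ) * |β - ((f 1 - f 0 : ℤ):ℝ)| = |(s:ℝ) * (β - ((f 1 - f 0 : ℤ):ℝ))| := by
    rw [abs_mul, abs_of_nonneg (by positivity : (0:ℝ) ≤ (s:ℝ))]
  have habs : |(s:ℝ) * (β - ((f 1 - f 0 : ℤ):ℝ))|
      ≤ |(s:ℝ) * (β - ((f 1 - f 0 : ℤ):ℝ)) + ((K:ℝ) * β - f 0)| + |(K:ℝ)*β - f 0| := by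
    have := abs_sub ((s:ℝ) * (β - ((f 1 - f 0 : ℤ):ℝ)) + ((K:ℝ) * β - f 0)) ((K:ℝ)*β - f 0)
    simpa using this
  rw [← e2] at habs
  linarith

/-- Distances with all four data in the Bohr set are within `1/8` of an integer
multiple of `1/√2`-type structure. -/
lemma dist_near (m n ℓ : ℕ) (hm : m ∈ A) (hn : n ∈ A) (hℓ : ℓ ∈ A)
    (h1 : ℓ ≤ m) (h2 : ℓ ≤ n) :
    ∃ z : ℤ, |(((m - ℓ) + (n - ℓ) : ℕ) : ℝ) * Real.sqrt 2 - z| < 1/8 := by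
  refine ⟨⌊(m:ℝ) * Real.sqrt 2⌋ + ⌊(n:ℝ) * Real.sqrt 2⌋ - 2*⌊(ℓ:ℝ) * Real.sqrt 2⌋, ?_⟩
  have em : (⌊(m:ℝ) * Real.sqrt 2⌋ : ℝ) + Int.fract ((m:ℝ) * Real.sqrt 2)
      = (m:ℝ) * Real.sqrt 2 := Int.floor_add_fract _
  have en : (⌊(n:ℝ) * Real.sqrt 2⌋ : ℝ) + Int.fract ((n:ℝ) * Real.sqrt 2)
      = (n:ℝ) * Real.sqrt 2 := Int.floor_add_fract _
  have eℓ : (⌊(ℓ:ℝ) * Real.sqrt 2⌋ : ℝ) + Int.fract ((ℓ:ℝ) * Real.sqrt 2)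
      = (ℓ:ℝ) * Real.sqrt 2 := Int.floor_add_fract _
  have ecast : (((m - ℓ) + (n - ℓ) : ℕ) : ℝ) = (m:ℝ) + n - 2*ℓ := by
    rw [Nat.cast_add, Nat.cast_sub h1, Nat.cast_sub h2]
    ring
  have hm' : Int.fract ((m:ℝ) * Real.sqrt 2) < 1/16 := hm
  have hn' : Int.fract ((n:ℝ) * Real.sqrt 2) < 1/16 := hn
  have hℓ' : Int.fract ((ℓ:ℝ) * Real.sqrt 2) < 1/16 := hℓ
  have hm0 := Int.fract_nonneg ((m:ℝ) * Real.sqrt 2)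
  have hn0 := Int.fract_nonneg ((n:ℝ) * Real.sqrt 2)
  have hℓ0 := Int.fract_nonneg ((ℓ:ℝ) * Real.sqrt 2)
  rw [ecast, abs_lt]
  push_cast
  constructor <;> nlinarith [em, en, eℓ]

/-- The subtree branching exactly at levels in `A`. -/
def TT : Set (List Bool) := {l | ∀ i, i ∉ A → l.getD i false = false}

/-- The union of the spheres at levels in `A`. -/
def XX : Set (List Bool) := {l ∈ TT | l.length ∈ A}

lemma nil_mem : ([] : List Bool) ∈ TT := by
  intro i _; simp

lemma prefix_mem : ∀ l ∈ TT, ∀ p : List Bool, p <+: l → p ∈ TT := by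
  intro l hl p hp i hi
  rcases lt_or_ge i p.length with h | h
  · have h2 : i < l.length := lt_of_lt_of_le h hp.length_le
    rw [List.getD_eq_getElem _ _ h, hp.getElem h, ← List.getD_eq_getElem _ _ h2]
    exact hl i hi
  · exact List.getD_eq_default _ _ h

lemma extend_mem : ∀ l ∈ TT, l ++ [false] ∈ TT := by
  intro l hl i hi
  rcases lt_or_ge i (l ++ [false]).length with h | h
  · rw [List.getD_eq_getElem _ _ h]
    rcases lt_or_ge i l.length with h2 | h2
    · rw [List.getElem_append_left h2, ← List.getD_eq_getElem _ _ h2]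
      exact hl i hi
    · have : i = l.length := by simp at h; omega
      subst this
      simp
  · exact List.getD_eq_default _ _ h

lemma replicate_mem (n : ℕ) : List.replicate n false ∈ TT := by
  intro i _
  rcases lt_or_ge i n with h | h
  · rw [List.getD_eq_getElem _ _ (by simpa using h)]
    simp
  · exact List.getD_eq_default _ _ (by simpa using h)

lemma lcpLen_nil_left (y : List Bool) : lcpLen [] y = 0 := by simp [lcpLen]

lemma lcpLen_nil_right (x : List Bool) : lcpLen x [] = 0 := by simp [lcpLen]

lemma lcpLen_cons (a b : Bool) (x y : List Bool) :
    lcpLen (a :: x) (b :: y) = if a = b then lcpLen x y + 1 else 0 := by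
  unfold lcpLen
  by_cases h : a = b
  · simp [List.takeWhile_cons, h]
  · simp [List.takeWhile_cons, h]

lemma lcpLen_le_left (x y : List Bool) : lcpLen x y ≤ x.length := by
  have h1 := (List.takeWhile_prefix (l := x.zip y) (fun p => p.1 == p.2)).length_le
  have h2 := List.length_zip (l₁ := x) (l₂ := y)
  unfold lcpLen; omega

lemma lcpLen_le_right (x y : List Bool) : lcpLen x y ≤ y.length := by
  have h1 := (List.takeWhile_prefix (l := x.zip y) (fun p => p.1 == p.2)).length_le
  have h2 := List.length_zip (l₁ := x) (l₂ := y)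
  unfold lcpLen; omega

lemma lcpLen_self : ∀ x : List Bool, lcpLen x x = x.length
  | [] => by simp [lcpLen]
  | a :: x => by rw [lcpLen_cons, if_pos rfl, lcpLen_self x]; rfl

lemma lcpLen_get_ne : ∀ (x y : List Bool), lcpLen x y < x.length → lcpLen x y < y.length →
    x.getD (lcpLen x y) false ≠ y.getD (lcpLen x y) false
  | [], _, h, _ => by simp [lcpLen_nil_left] at h
  | a :: x, [], _, h => by simp [lcpLen_nil_right] at h
  | a :: x, b :: y, h1, h2 => by
    by_cases hab : a = b
    · rw [lcpLen_cons, if_pos hab] at h1 h2 ⊢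
      simp only [List.length_cons, add_lt_add_iff_right] at h1 h2
      simpa using lcpLen_get_ne x y h1 h2
    · rw [lcpLen_cons, if_neg hab] at h1 h2 ⊢
      simpa using hab

/-- Distances between distinct elements of `XX` are of the form `(m-ℓ)+(n-ℓ)` with
`m, n, ℓ ∈ A`. -/
lemma key (x y : List Bool) (hx : x ∈ XX) (hy : y ∈ XX) :
    ∃ m n ℓ : ℕ, m ∈ A ∧ n ∈ A ∧ ℓ ∈ A ∧ ℓ ≤ m ∧ ℓ ≤ n ∧
      btDist x y = (m - ℓ) + (n - ℓ) := by
  obtain ⟨hxT, hxA⟩ := hx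
  obtain ⟨hyT, hyA⟩ := hy
  refine ⟨x.length, y.length, lcpLen x y, hxA, hyA, ?_, lcpLen_le_left x y,
    lcpLen_le_right x y, rfl⟩
  rcases eq_or_lt_of_le (lcpLen_le_left x y) with h | h
  · rw [h]; exact hxA
  rcases eq_or_lt_of_le (lcpLen_le_right x y) with h' | h'
  · rw [h']; exact hyA
  by_contra hA
  exact lcpLen_get_ne x y h h' (by rw [hxT _ hA, hyT _ hA])

lemma btDist_self (x : List Bool) : btDist x x = 0 := by
  unfold btDist
  rw [lcpLen_self]
  omega

lemma sphere_finite (n : ℕ) : (btSphere TT n).Finite :=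
  Set.Finite.subset (List.finite_length_eq Bool n) (fun l hl => hl.2)

lemma sphere_nonempty (n : ℕ) : (btSphere TT n).Nonempty :=
  ⟨List.replicate n false, replicate_mem n, List.length_replicate⟩

lemma sphere_ncard_pos (n : ℕ) : 0 < (btSphere TT n).ncard :=
  (Set.ncard_pos (sphere_finite n)).2 (sphere_nonempty n)

lemma sphere_ncard_le (n : ℕ) : (btSphere TT n).ncard ≤ 2 ^ n := by
  have : Nat.card (btSphere TT n) ≤ Nat.card (Fin n → Bool) := by
    apply Nat.card_le_card_of_injective
      (f := fun (l : ↥(btSphere TT n)) => fun i : Fin n => (l.1 : List Bool).getD i false)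
    intro ⟨l1, h1⟩ ⟨l2, h2⟩ h
    ext1
    apply List.ext_getElem (by rw [h1.2, h2.2])
    intro i hi1 hi2
    have hin : i < n := by rw [← h1.2]; exact hi1
    have := congrFun h ⟨i, hin⟩
    simp only at this
    rwa [List.getD_eq_getElem _ _ hi1, List.getD_eq_getElem _ _ hi2] at this
  rwa [Nat.card_coe_set_eq, Nat.card_eq_fintype_card, Fintype.card_fun,
    Fintype.card_bool, Fintype.card_fin] at this

open Classical in
lemma sphere_ncard_ge (n : ℕ) :
    2 ^ ((Finset.range n).filter (fun i => i ∈ A)).card ≤ (btSphere TT n).ncard := by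
  classical
  set B := (Finset.range n).filter (fun i => i ∈ A) with hB
  have : Nat.card (↥B → Bool) ≤ Nat.card (btSphere TT n) := by
    have : Finite ↥(btSphere TT n) := (sphere_finite n).to_subtype
    apply Nat.card_le_card_of_injective
      (f := fun f => (⟨List.ofFn (fun i : Fin n => if h : i.1 ∈ B then f ⟨i.1, h⟩ else false),
        ?_, by simp⟩ : ↥(btSphere TT n)))
    · intro f g h
      simp only [Subtype.mk_eq_mk] at h
      funext ⟨b, hb⟩
      have hbn : b < n := by
        have := Finset.mem_filter.1 hb
        simpa using this.1
      have := congrArg (fun l : List Bool => l.getD b false) (congrArg Subtype.val h)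
      simpa [List.getD_eq_getElem, List.getElem_ofFn, hbn, hb] using this
    · intro i hi
      rcases lt_or_ge i n with h | h
      · rw [List.getD_eq_getElem _ _ (by simpa using h), List.getElem_ofFn]
        have : i ∉ B := by
          rw [hB]; simp only [Finset.mem_filter]; tauto
        simp [this]
      · exact List.getD_eq_default _ _ (by simpa using h)
  rwa [Nat.card_coe_set_eq, Nat.card_eq_fintype_card, Fintype.card_fun,
    Fintype.card_bool, Fintype.card_coe] at this

open Classical in
lemma count_lb (N : ℕ) : N / 2407 ≤ ((Finset.Icc 1 N).filter (fun n => n ∈ A)).card := by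
  classical
  choose u hu1 hu2 hu3 using synd
  rw [← Finset.card_range (N / 2407)]
  apply Finset.card_le_card_of_injOn (fun i => u (i * 2407))
  · intro i hi
    simp only [Finset.mem_coe, Finset.mem_range] at hi
    have h1 := hu1 (i * 2407)
    have h2 := hu2 (i * 2407)
    have h3 : (i + 1) * 2407 ≤ (N / 2407) * 2407 := Nat.mul_le_mul_right _ (by omega)
    have h4 : (N / 2407) * 2407 ≤ N := Nat.div_mul_le_self N 2407
    simp only [Finset.mem_coe, Finset.mem_filter, Finset.mem_Icc]
    exact ⟨⟨by omega, by omega⟩, hu3 _⟩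
  · intro i hi j hj hij
    simp only [Finset.mem_coe, Finset.mem_range] at hi hj
    by_contra hne
    have hij' : u (i * 2407) = u (j * 2407) := hij
    rcases Nat.lt_or_ge i j with h | h
    · have h1 := hu2 (i * 2407)
      have h2 := hu1 (j * 2407)
      have : (i + 1) * 2407 ≤ j * 2407 := Nat.mul_le_mul_right _ (by omega)
      omega
    · have h' : j < i := by omega
      have h1 := hu2 (j * 2407)
      have h2 := hu1 (i * 2407)
      have : (j + 1) * 2407 ≤ i * 2407 := Nat.mul_le_mul_right _ (by omega)
      omega

open Classical in
lemma count_lb_range (n : ℕ) :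
    (n - 1) / 2407 ≤ ((Finset.range n).filter (fun i => i ∈ A)).card := by
  classical
  refine le_trans (count_lb (n - 1)) (Finset.card_le_card ?_)
  apply Finset.filter_subset_filter
  intro a ha
  simp only [Finset.mem_Icc] at ha
  simp only [Finset.mem_range]
  omega

lemma cast_div_lb (n : ℕ) : (n : ℝ) / 2407 - 1 ≤ ((n / 2407 : ℕ) : ℝ) := by
  have h : n < n / 2407 * 2407 + 2407 := by omega
  have : (n : ℝ) < ((n / 2407 : ℕ) : ℝ) * 2407 + 2407 := by exact_mod_cast h
  linarith

lemma dim_pos : 0 < btDimension TT := by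
  classical
  have hub : ∀ n : ℕ, Real.logb 2 ((btSphere TT n).ncard : ℝ) / (n : ℝ) ≤ 1 := by
    intro n
    rcases Nat.eq_zero_or_pos n with rfl | hn
    · simp
    · have h1 : (0:ℝ) < ((btSphere TT n).ncard : ℝ) := by
        exact_mod_cast sphere_ncard_pos n
      have h2 : ((btSphere TT n).ncard : ℝ) ≤ (2:ℝ) ^ n := by
        exact_mod_cast sphere_ncard_le n
      have h3 : Real.logb 2 ((btSphere TT n).ncard : ℝ) ≤ Real.logb 2 ((2:ℝ) ^ n) :=
        Real.logb_le_logb_of_le (by norm_num) h1 h2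
      rw [Real.logb_pow, Real.logb_self_eq_one (by norm_num)] at h3
      rw [div_le_one (by exact_mod_cast hn)]
      simpa using h3
  have hco : IsCoboundedUnder (· ≥ ·) atTop
      (fun n : ℕ => Real.logb 2 ((btSphere TT n).ncard : ℝ) / (n : ℝ)) :=
    (isBoundedUnder_of ⟨1, fun n => hub n⟩).isCoboundedUnder_ge
  have hev : ∀ᶠ n : ℕ in atTop,
      (1:ℝ)/4814 ≤ Real.logb 2 ((btSphere TT n).ncard : ℝ) / (n : ℝ) := by
    filter_upwards [eventually_ge_atTop 4816] with n hn
    have hn0 : (0:ℝ) < (n:ℝ) := by positivity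
    have h1 : (0:ℝ) < ((btSphere TT n).ncard : ℝ) := by
      exact_mod_cast sphere_ncard_pos n
    have h2 : ((2:ℝ) ^ ((Finset.range n).filter (fun i => i ∈ A)).card : ℝ)
        ≤ ((btSphere TT n).ncard : ℝ) := by
      exact_mod_cast sphere_ncard_ge n
    have h3 : Real.logb 2 ((2:ℝ) ^ ((Finset.range n).filter (fun i => i ∈ A)).card)
        ≤ Real.logb 2 ((btSphere TT n).ncard : ℝ) :=
      Real.logb_le_logb_of_le (by norm_num) (by positivity) h2
    rw [Real.logb_pow, Real.logb_self_eq_one (by norm_num), mul_one] at h3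
    have h4 : ((n - 1) / 2407 : ℕ) ≤ ((Finset.range n).filter (fun i => i ∈ A)).card :=
      count_lb_range n
    have h5 : ((n:ℝ) - 1) / 2407 - 1 ≤ (((n - 1) / 2407 : ℕ) : ℝ) := by
      have := cast_div_lb (n - 1)
      have hc : ((n - 1 : ℕ) : ℝ) = (n:ℝ) - 1 := by
        have : 1 ≤ n := by omega
        push_cast [this]
        ring
      rw [hc] at this
      exact this
    have h6 : (((n - 1) / 2407 : ℕ) : ℝ)
        ≤ (((Finset.range n).filter (fun i => i ∈ A)).card : ℝ) := by exact_mod_cast h4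
    have h7 : (n:ℝ)/4814 ≤ ((n:ℝ) - 1) / 2407 - 1 := by
      have : (4816:ℝ) ≤ n := by exact_mod_cast hn
      nlinarith
    rw [le_div_iff₀ hn0]
    calc (1:ℝ)/4814 * n = (n:ℝ)/4814 := by ring
      _ ≤ ((n:ℝ) - 1) / 2407 - 1 := h7
      _ ≤ Real.logb 2 ((btSphere TT n).ncard : ℝ) := by linarith
  have := le_liminf_of_le hco hev
  calc (0:ℝ) < 1/4814 := by norm_num
    _ ≤ _ := this

lemma inter_eq (n : ℕ) (hn : n ∈ A) : XX ∩ btSphere TT n = btSphere TT n := by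
  ext l
  constructor
  · exact fun h => h.2
  · intro h
    exact ⟨⟨h.1, by rw [h.2]; exact hn⟩, h⟩

lemma ratio_nonneg (n : ℕ) :
    0 ≤ ((XX ∩ btSphere TT n).ncard : ℝ) / ((btSphere TT n).ncard : ℝ) := by
  positivity

lemma ratio_le_one (n : ℕ) :
    ((XX ∩ btSphere TT n).ncard : ℝ) / ((btSphere TT n).ncard : ℝ) ≤ 1 := by
  have h1 : (0:ℝ) < ((btSphere TT n).ncard : ℝ) := by exact_mod_cast sphere_ncard_pos n
  rw [div_le_one h1]
  exact_mod_cast Set.ncard_le_ncard Set.inter_subset_right (sphere_finite n)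

lemma ratio_eq_one (n : ℕ) (hn : n ∈ A) :
    ((XX ∩ btSphere TT n).ncard : ℝ) / ((btSphere TT n).ncard : ℝ) = 1 := by
  rw [inter_eq n hn]
  exact div_self (by exact_mod_cast (sphere_ncard_pos n).ne')

lemma dens_pos : 0 < btLowerDensity TT XX := by
  classical
  have hub : ∀ N : ℕ,
      (∑ n ∈ Finset.Icc 1 N,
        ((XX ∩ btSphere TT n).ncard : ℝ) / ((btSphere TT n).ncard : ℝ)) / (N : ℝ) ≤ 1 := by
    intro N
    rcases Nat.eq_zero_or_pos N with rfl | hN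
    · simp
    · have hN0 : (0:ℝ) < (N:ℝ) := by positivity
      rw [div_le_one hN0]
      calc ∑ n ∈ Finset.Icc 1 N,
            ((XX ∩ btSphere TT n).ncard : ℝ) / ((btSphere TT n).ncard : ℝ)
          ≤ ∑ n ∈ Finset.Icc 1 N, (1:ℝ) := Finset.sum_le_sum fun n _ => ratio_le_one n
        _ = N := by simp [Nat.card_Icc]
  have hco : IsCoboundedUnder (· ≥ ·) atTop
      (fun N : ℕ =>
        (∑ n ∈ Finset.Icc 1 N,
          ((XX ∩ btSphere TT n).ncard : ℝ) / ((btSphere TT n).ncard : ℝ)) / (N : ℝ)) :=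
    (isBoundedUnder_of ⟨1, fun N => hub N⟩).isCoboundedUnder_ge
  have hev : ∀ᶠ N : ℕ in atTop,
      (1:ℝ)/4814 ≤
      (∑ n ∈ Finset.Icc 1 N,
        ((XX ∩ btSphere TT n).ncard : ℝ) / ((btSphere TT n).ncard : ℝ)) / (N : ℝ) := by
    filter_upwards [eventually_ge_atTop 4816] with N hN
    have hN0 : (0:ℝ) < (N:ℝ) := by positivity
    have hsum : ((((Finset.Icc 1 N).filter (fun n => n ∈ A)).card : ℝ))
        ≤ ∑ n ∈ Finset.Icc 1 N,
            ((XX ∩ btSphere TT n).ncard : ℝ) / ((btSphere TT n).ncard : ℝ) := by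
      have h1 : ∑ n ∈ (Finset.Icc 1 N).filter (fun n => n ∈ A),
            ((XX ∩ btSphere TT n).ncard : ℝ) / ((btSphere TT n).ncard : ℝ)
          = (((Finset.Icc 1 N).filter (fun n => n ∈ A)).card : ℝ) := by
        rw [Finset.sum_congr rfl (fun n hn => ratio_eq_one n (Finset.mem_filter.1 hn).2)]
        simp
      rw [← h1]
      apply Finset.sum_le_sum_of_subset_of_nonneg (Finset.filter_subset _ _)
      intro i _ _
      exact ratio_nonneg i
    have h4 : (N / 2407 : ℕ) ≤ ((Finset.Icc 1 N).filter (fun n => n ∈ A)).card := count_lb N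
    have h5 : (N:ℝ)/2407 - 1 ≤ (((Finset.Icc 1 N).filter (fun n => n ∈ A)).card : ℝ) := by
      have := cast_div_lb N
      have h6 : ((N / 2407 : ℕ) : ℝ)
          ≤ (((Finset.Icc 1 N).filter (fun n => n ∈ A)).card : ℝ) := by exact_mod_cast h4
      linarith
    rw [le_div_iff₀ hN0]
    have h7 : (1:ℝ)/4814 * N ≤ (N:ℝ)/2407 - 1 := by
      have : (4816:ℝ) ≤ N := by exact_mod_cast hN
      nlinarith
    linarith
  have := le_liminf_of_le hco hev
  calc (0:ℝ) < 1/4814 := by norm_num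
    _ ≤ _ := this

end S12

/-- There is a leafless rooted subtree `T ⊆ T₂ᵒ` of positive Hausdorff dimension and a
subset `X ⊆ V(T)` of positive lower density such that for all `k, K ≥ 1` there exists
`t ≥ K` with no pair `x, y ∈ X` at distance `k·t`. -/
theorem stmt12 :
    ∃ (T X : Set (List Bool)),
      [] ∈ T ∧
      (∀ l ∈ T, ∀ p : List Bool, p <+: l → p ∈ T) ∧
      (∀ l ∈ T, ∃ b : Bool, l ++ [b] ∈ T) ∧
      X ⊆ T ∧
      0 < btDimension T ∧
      0 < btLowerDensity T X ∧
      ∀ k : ℕ, 1 ≤ k → ∀ K : ℕ, 1 ≤ K → ∃ t : ℕ, K ≤ t ∧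
        ∀ x ∈ X, ∀ y ∈ X, btDist x y ≠ k * t := by
  refine ⟨S12.TT, S12.XX, S12.nil_mem, S12.prefix_mem,
    fun l hl => ⟨false, S12.extend_mem l hl⟩, fun l hl => hl.1, S12.dim_pos, S12.dens_pos, ?_⟩
  intro k hk K hK
  have hβ : Irrational ((k:ℝ) * Real.sqrt 2) :=
    irrational_sqrt_two.natCast_mul (by omega)
  obtain ⟨t, ht, havoid⟩ := S12.avoid ((k:ℝ) * Real.sqrt 2) hβ K
  refine ⟨t, ht, ?_⟩
  intro x hx y hy hEq
  rcases eq_or_ne x y with rfl | hxy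
  · rw [S12.btDist_self] at hEq
    have : 1 ≤ k * t := Nat.one_le_iff_ne_zero.2 (Nat.mul_ne_zero (by omega) (by omega))
    omega
  · obtain ⟨m, n, ℓ, hm, hn, hℓ, h1, h2, hd⟩ := S12.key x y hx hy
    obtain ⟨z, hz⟩ := S12.dist_near m n ℓ hm hn hℓ h1 h2
    rw [← hd, hEq] at hz
    have hcast : ((k * t : ℕ) : ℝ) * Real.sqrt 2 = (t:ℝ) * ((k:ℝ) * Real.sqrt 2) := by
      push_cast; ring
    rw [hcast] at hz
    exact absurd hz (not_lt.2 (havoid z))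
end
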